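/- arXiv:2112.12734 — 7 statements merged into one kernel-verified Lean document; each statement's English description precedes it below -/
import Mathlib

section
/- There exists N₀ ∈ ℕ such that for every natural number N ≥ N₀ and all integers n, j with |n| ≥ N² and |j| ≥ N⁶, the number of ordered pairs (n₁, n₂) ∈ ℤ² with |n₁| ≤ N and |n₂| ≤ N satisfying P(n₁) + P(n₂) + P(n − n₁ − n₂) = j is at most 3. -/
open scoped BigOperators

/-- Dispersion relation of the linearized 1D periodic Dysthe equation. -/
def P (n : ℤ) : ℤ := n ^ 3 - 2 * n ^ 2 + 8 * n

/-- `rcount N n j` is the number of ordered pairs `(n₁, n₂) ∈ ℤ²` with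
`|n₁| ≤ N`, `|n₂| ≤ N` satisfying `P n₁ + P n₂ + P (n - n₁ - n₂) = j`. -/
noncomputable def rcount (N : ℕ) (n j : ℤ) : ℕ :=
  ((Finset.Icc (-(N : ℤ)) (N : ℤ) ×ˢ Finset.Icc (-(N : ℤ)) (N : ℤ)).filter
    (fun q => P q.1 + P q.2 + P (n - q.1 - q.2) = j)).card

lemma Pbound (M a : ℤ) (h1 : -M ≤ a) (h2 : a ≤ M) :
    |P a| ≤ M ^ 3 + 2 * M ^ 2 + 8 * M := by
  have hM : 0 ≤ M := by omega
  have haux1 : (0:ℤ) ≤ a ^ 2 + a * M + M ^ 2 := by nlinarith [sq_nonneg (a + M), sq_nonneg (a - M)]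
  have haux2 : (0:ℤ) ≤ a ^ 2 - a * M + M ^ 2 := by nlinarith [sq_nonneg (a + M), sq_nonneg (a - M)]
  have hc1 : 0 ≤ (M - a) * (a ^ 2 + a * M + M ^ 2) := mul_nonneg (by omega) haux1
  have hc2 : 0 ≤ (a + M) * (a ^ 2 - a * M + M ^ 2) := mul_nonneg (by omega) haux2
  have hsq : 0 ≤ (M - a) * (M + a) := mul_nonneg (by omega) (by omega)
  rw [abs_le]
  unfold P
  constructor <;> nlinarith

/-- Uniqueness of the sum `n₁ + n₂` among solutions. -/
lemma sum_unique (M n j : ℤ) (hM : 1000 ≤ M) (hn : M ^ 2 ≤ |n|)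
    (a₁ a₂ b₁ b₂ : ℤ)
    (ha1 : -M ≤ a₁) (ha1' : a₁ ≤ M) (ha2 : -M ≤ a₂) (ha2' : a₂ ≤ M)
    (hb1 : -M ≤ b₁) (hb1' : b₁ ≤ M) (hb2 : -M ≤ b₂) (hb2' : b₂ ≤ M)
    (ea : P a₁ + P a₂ + P (n - a₁ - a₂) = j)
    (eb : P b₁ + P b₂ + P (n - b₁ - b₂) = j) :
    a₁ + a₂ = b₁ + b₂ := by
  by_contra hne
  set x := n - a₁ - a₂ with hx
  set y := n - b₁ - b₂ with hy
  have key : 2 * (P x - P y) =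
      (x - y) * ((x - 2) ^ 2 + (y - 2) ^ 2 + (x + y) ^ 2 + 8) := by
    unfold P; ring
  -- lower bound on |x|
  have hxabs : M ^ 2 - 2 * M ≤ |x| := by
    have h1 : |n| - |a₁ + a₂| ≤ |n - (a₁ + a₂)| := abs_sub_abs_le_abs_sub n (a₁ + a₂)
    have h2 : |a₁ + a₂| ≤ 2 * M := by
      rw [abs_le]; omega
    have h3 : n - (a₁ + a₂) = x := by rw [hx]; ring
    rw [h3] at h1
    omega
  have hx2 : M ^ 2 - 2 * M - 2 ≤ |x - 2| := by
    have h1 : |x| - |(2:ℤ)| ≤ |x - 2| := abs_sub_abs_le_abs_sub x 2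
    have : |(2:ℤ)| = 2 := by norm_num
    omega
  have hMsq : 1000 * M ≤ M ^ 2 := by
    have h := mul_le_mul_of_nonneg_right hM (show (0:ℤ) ≤ M by linarith)
    have hp : M * M = M ^ 2 := by ring
    linarith
  have hx2sq : (M ^ 2 - 2 * M - 2) ^ 2 ≤ (x - 2) ^ 2 := by
    have h0 : 0 ≤ M ^ 2 - 2 * M - 2 := by linarith
    calc (M ^ 2 - 2 * M - 2) ^ 2 ≤ |x - 2| ^ 2 := by
          apply pow_le_pow_left₀ h0 hx2
      _ = (x - 2) ^ 2 := sq_abs _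
  have hQ : (M ^ 2 - 2 * M - 2) ^ 2 + 8 ≤
      (x - 2) ^ 2 + (y - 2) ^ 2 + (x + y) ^ 2 + 8 := by
    have s1 := sq_nonneg (y - 2)
    have s2 := sq_nonneg (x + y)
    linarith
  have hQ0 : (0:ℤ) ≤ (x - 2) ^ 2 + (y - 2) ^ 2 + (x + y) ^ 2 + 8 := by positivity
  -- |x - y| ≥ 1
  have hxy : 1 ≤ |x - y| := by
    apply Int.one_le_abs
    rw [hx, hy]; intro h; apply hne; omega
  -- bound on the RHS difference
  have hR : P x - P y = (P b₁ + P b₂) - (P a₁ + P a₂) := by omega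
  have hPa1 := Pbound M a₁ ha1 ha1'
  have hPa2 := Pbound M a₂ ha2 ha2'
  have hPb1 := Pbound M b₁ hb1 hb1'
  have hPb2 := Pbound M b₂ hb2 hb2'
  have hRb : |P x - P y| ≤ 4 * (M ^ 3 + 2 * M ^ 2 + 8 * M) := by
    rw [hR]
    obtain ⟨u1, u2⟩ := abs_le.mp hPa1
    obtain ⟨v1, v2⟩ := abs_le.mp hPa2
    obtain ⟨w1, w2⟩ := abs_le.mp hPb1
    obtain ⟨z1, z2⟩ := abs_le.mp hPb2
    rw [abs_le]
    constructor <;> linarith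
  -- put it together
  have hbig : (M ^ 2 - 2 * M - 2) ^ 2 + 8 ≤ 2 * |P x - P y| := by
    have h1 : 2 * |P x - P y| = |x - y| * ((x - 2) ^ 2 + (y - 2) ^ 2 + (x + y) ^ 2 + 8) := by
      rw [← abs_of_nonneg hQ0, ← abs_mul, ← key, abs_mul]
      norm_num
    have h3 : (x - 2) ^ 2 + (y - 2) ^ 2 + (x + y) ^ 2 + 8 ≤
        |x - y| * ((x - 2) ^ 2 + (y - 2) ^ 2 + (x + y) ^ 2 + 8) :=
      le_mul_of_one_le_left hQ0 hxy
    linarith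
  have contra : (M ^ 2 - 2 * M - 2) ^ 2 + 8 ≤ 8 * M ^ 3 + 16 * M ^ 2 + 64 * M := by
    linarith
  have hM3 : 1000 * M ^ 3 ≤ M * M ^ 3 :=
    mul_le_mul_of_nonneg_right hM (by positivity)
  have hMM : M * M ^ 3 = M ^ 4 := by ring
  have expand : (M ^ 2 - 2 * M - 2) ^ 2 = M ^ 4 - 4 * M ^ 3 + 8 * M + 4 := by ring
  have hM1 : (1:ℤ) ≤ M := by linarith
  have e2 : M ≤ M ^ 2 := by
    calc M = M * 1 := by ring
      _ ≤ M * M := mul_le_mul_of_nonneg_left hM1 (by linarith)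
      _ = M ^ 2 := by ring
  have e1 : M ^ 2 ≤ M ^ 3 := by
    calc M ^ 2 = M ^ 2 * 1 := by ring
      _ ≤ M ^ 2 * M := mul_le_mul_of_nonneg_left hM1 (by positivity)
      _ = M ^ 3 := by ring
  linarith

/-- For a fixed sum `m`, two solutions with the same first coordinate relation. -/
lemma quad_roots (m s a b : ℤ)
    (ha : P a + P (m - a) = s) (hb : P b + P (m - b) = s) :
    a = b ∨ a + b = m := by
  have key : (3 * m - 4) * (a - b) * (a + b - m) = 0 := by
    have h : P a + P (m - a) - (P b + P (m - b)) = 0 := by omega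
    unfold P at h
    linear_combination h
  have hm : (3 * m - 4) ≠ 0 := by omega
  rcases mul_eq_zero.mp key with h | h
  · rcases mul_eq_zero.mp h with h' | h'
    · exact absurd h' hm
    · left; omega
  · right; omega

theorem stmt1 :
    ∃ N₀ : ℕ, ∀ (N : ℕ), N₀ ≤ N → ∀ (n j : ℤ),
      (N : ℤ) ^ 2 ≤ |n| → (N : ℤ) ^ 6 ≤ |j| → rcount N n j ≤ 3 := by
  use 1000
  intro N hN n j hn _
  have hM : (1000:ℤ) ≤ (N:ℤ) := by exact_mod_cast hN
  rw [rcount]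
  by_contra hc
  push_neg at hc
  have h2 : 2 < ((Finset.Icc (-(N : ℤ)) (N : ℤ) ×ˢ Finset.Icc (-(N : ℤ)) (N : ℤ)).filter
      (fun q => P q.1 + P q.2 + P (n - q.1 - q.2) = j)).card := by omega
  obtain ⟨a, b, c, ha, hb, hcmem, hab, hac, hbc⟩ := Finset.two_lt_card_iff.mp h2
  simp only [Finset.mem_filter, Finset.mem_product, Finset.mem_Icc] at ha hb hcmem
  obtain ⟨⟨⟨ha11, ha12⟩, ha21, ha22⟩, hea⟩ := ha
  obtain ⟨⟨⟨hb11, hb12⟩, hb21, hb22⟩, heb⟩ := hb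
  obtain ⟨⟨⟨hc11, hc12⟩, hc21, hc22⟩, hec⟩ := hcmem
  -- all three have the same sum m
  have mab : a.1 + a.2 = b.1 + b.2 :=
    sum_unique (N:ℤ) n j hM hn a.1 a.2 b.1 b.2 ha11 ha12 ha21 ha22 hb11 hb12 hb21 hb22 hea heb
  have mac : a.1 + a.2 = c.1 + c.2 :=
    sum_unique (N:ℤ) n j hM hn a.1 a.2 c.1 c.2 ha11 ha12 ha21 ha22 hc11 hc12 hc21 hc22 hea hec
  set m := a.1 + a.2 with hm
  -- identical second coordinates via first
  have ea' : P a.1 + P (m - a.1) = j - P (n - m) := by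
    have h1 : m - a.1 = a.2 := by omega
    rw [h1]
    have h2 : n - a.1 - a.2 = n - m := by omega
    rw [h2] at hea
    omega
  have eb' : P b.1 + P (m - b.1) = j - P (n - m) := by
    have h1 : m - b.1 = b.2 := by omega
    rw [h1]
    have h2 : n - b.1 - b.2 = n - m := by omega
    rw [h2] at heb
    omega
  have ec' : P c.1 + P (m - c.1) = j - P (n - m) := by
    have h1 : m - c.1 = c.2 := by omega
    rw [h1]
    have h2 : n - c.1 - c.2 = n - m := by omega
    rw [h2] at hec
    omega
  have pair_eq : ∀ p q : ℤ × ℤ, p.1 + p.2 = m → q.1 + q.2 = m → p.1 = q.1 → p = q := by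
    intro p q hp hq h1
    have : p.2 = q.2 := by omega
    exact Prod.ext h1 this
  rcases quad_roots m (j - P (n - m)) a.1 b.1 ea' eb' with h | hab' 
  · exact hab (pair_eq a b rfl mab.symm h)
  rcases quad_roots m (j - P (n - m)) a.1 c.1 ea' ec' with h | hac'
  · exact hac (pair_eq a c rfl mac.symm h)
  rcases quad_roots m (j - P (n - m)) b.1 c.1 eb' ec' with h | hbc'
  · exact hbc (pair_eq b c mab.symm mac.symm h)
  · -- a.1 + b.1 = m, a.1 + c.1 = m, b.1 + c.1 = m ⇒ b.1 = c.1 and then contradiction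
    have : b.1 = c.1 := by omega
    exact hbc (pair_eq b c mab.symm mac.symm this)
end

section
/- There exists N₀ ∈ ℕ such that for every natural number N ≥ N₀ and all integers n, j satisfying either (|n| ≤ N² and |j| ≥ N⁶) or (|n| ≥ N² and |j| ≤ N⁶), the number of ordered pairs (n₁, n₂) ∈ ℤ² with |n₁| ≤ N and |n₂| ≤ N satisfying P(n₁) + P(n₂) + P(n − n₁ − n₂) = j is at most 3. -/
open scoped BigOperators

set_option maxHeartbeats 1000000

/-- `P` is monotone (its derivative `3x² - 4x + 8` is positive). -/
lemma Pmono {x y : ℤ} (h : x ≤ y) : P x ≤ P y := by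
  have h' : 0 ≤ y - x := sub_nonneg.2 h
  unfold P
  nlinarith [mul_nonneg h' (sq_nonneg (x+y)), mul_nonneg h' (sq_nonneg (x-2)),
    mul_nonneg h' (sq_nonneg (y-2))]

/-- Size bound for `P`. -/
lemma Pabs {a B : ℤ} (hB : 0 ≤ B) (h : |a| ≤ B) : |P a| ≤ B^3 + 2*B^2 + 8*B := by
  obtain ⟨h1, h2⟩ := abs_le.mp h
  rw [abs_le]
  unfold P
  constructor <;>
    nlinarith [mul_nonneg (sub_nonneg.2 h2) (sq_nonneg (a+B)), mul_nonneg (sub_nonneg.2 h2) (sq_nonneg (a-B)),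
      mul_nonneg (sub_nonneg.2 (neg_le.1 h1)) (sq_nonneg (a+B)), mul_nonneg (sub_nonneg.2 (neg_le.1 h1)) (sq_nonneg (a-B)),
      mul_nonneg (sub_nonneg.2 h2) (sub_nonneg.2 (neg_le.1 h1)), sq_nonneg a, sq_nonneg B]

/-- If `m < m'` both have large absolute value, `P m` and `P m'` cannot both lie in a
window of size `4(N³ + 2N² + 8N)`. -/
lemma gap_contra {N : ℕ} (hN : 100 ≤ N) {m m' S S' : ℤ} (hlt : m < m')
    (hS : |S| ≤ 2*((N:ℤ)^3 + 2*(N:ℤ)^2 + 8*(N:ℤ)))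
    (hS' : |S'| ≤ 2*((N:ℤ)^3 + 2*(N:ℤ)^2 + 8*(N:ℤ)))
    (heq : S + P m = S' + P m')
    (hm : (N:ℤ)^2 - 2*(N:ℤ) ≤ |m|) : False := by
  have hN' : (100:ℤ) ≤ (N:ℤ) := by exact_mod_cast hN
  have hK0 : 0 ≤ (N:ℤ)^2 - 2*(N:ℤ) := by nlinarith
  have hK2 : ((N:ℤ)^2 - 2*(N:ℤ))^2 ≤ m^2 := by
    have := pow_le_pow_left₀ hK0 hm 2
    rwa [sq_abs] at this
  have hmono : P (m+1) ≤ P m' := Pmono (by omega)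
  have hP1 : P (m+1) = P m + (3*m^2 - m + 7) := by unfold P; ring
  have hm2 : m ≤ m^2 := by
    rcases le_or_gt m 0 with h | h
    · nlinarith [sq_nonneg m]
    · have h1 : (1:ℤ) ≤ m := h
      nlinarith [sq_nonneg (m-1)]
  obtain ⟨hS1, hS2⟩ := abs_le.mp hS
  obtain ⟨hS1', hS2'⟩ := abs_le.mp hS'
  have h100 : 100*(N:ℤ)^3 ≤ (N:ℤ)^4 := by
    nlinarith [pow_nonneg (show (0:ℤ) ≤ (N:ℤ) by linarith) 3]
  nlinarith [h100, hK2, hm2, sq_nonneg ((N:ℤ)-100)]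

/-- In either frequency regime, the third frequency `n - a - b` of any solution is large. -/
lemma mbound {N : ℕ} (hN : 100 ≤ N) {n j a b : ℤ}
    (ha : |a| ≤ (N:ℤ)) (hb : |b| ≤ (N:ℤ))
    (he : P a + P b + P (n - a - b) = j)
    (hreg : (|n| ≤ (N : ℤ) ^ 2 ∧ (N : ℤ) ^ 6 ≤ |j|) ∨
       ((N : ℤ) ^ 2 ≤ |n| ∧ |j| ≤ (N : ℤ) ^ 6)) :
    (N:ℤ)^2 - 2*(N:ℤ) ≤ |n - a - b| := by
  have hN' : (100:ℤ) ≤ (N:ℤ) := by exact_mod_cast hN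
  have hNn : (0:ℤ) ≤ (N:ℤ) := by linarith
  have hPa := Pabs hNn ha
  have hPb := Pabs hNn hb
  rcases hreg with ⟨hn, hj⟩ | ⟨hn, hj⟩
  · by_contra hcon
    push_neg at hcon
    have hmle : |n - a - b| ≤ (N:ℤ)^2 - 2*(N:ℤ) - 1 := by omega
    have hB0 : (0:ℤ) ≤ (N:ℤ)^2 - 2*(N:ℤ) - 1 := by nlinarith
    have hPm := Pabs hB0 hmle
    have hPm' : |P (n - a - b)| ≥ |j| - |P a| - |P b| := by
      have h1 : P (n - a - b) = j - P a - P b := by linarith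
      rw [h1]
      linarith [abs_sub_abs_le_abs_sub (j - P a) (P b), abs_sub_abs_le_abs_sub j (P a)]
    set B := (N:ℤ)^2 - 2*(N:ℤ) - 1 with hBdef
    have hBle : B ≤ (N:ℤ)^2 - 201 := by linarith
    have hB3 : B^3 ≤ ((N:ℤ)^2 - 201)^3 := pow_le_pow_left₀ hB0 hBle 3
    have hB2 : B^2 ≤ ((N:ℤ)^2 - 201)^2 := pow_le_pow_left₀ hB0 hBle 2
    have hsq : (10000:ℤ) ≤ (N:ℤ)^2 := by nlinarith
    have h4a : 10000*(N:ℤ)^2 ≤ (N:ℤ)^4 := by nlinarith [sq_nonneg (N:ℤ)]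
    have h4b : 100*(N:ℤ)^3 ≤ (N:ℤ)^4 := by
      nlinarith [pow_nonneg hNn 3]
    have h4c : (N:ℤ) ≤ (N:ℤ)^2 := by nlinarith
    have hup : (N:ℤ)^6 - 2*((N:ℤ)^3 + 2*(N:ℤ)^2 + 8*(N:ℤ)) ≤
        ((N:ℤ)^2-201)^3 + 2*((N:ℤ)^2-201)^2 + 8*((N:ℤ)^2-201) := by
      linarith [hPm, hPm', hj, hPa, hPb, hB3, hB2, hBle]
    nlinarith [hup, h4a, h4b, h4c, hsq]
  · have h1 : |n| ≤ |n - a - b| + |a| + |b| := by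
      have h2 : n - a - b + (a + b) = n := by ring
      have h3 := abs_add_le (n - a - b) (a + b)
      rw [h2] at h3
      linarith [abs_add_le a b]
    linarith

/-- Any two solutions with the same `n, j` in the regime have the same `n₁ + n₂`. -/
lemma same_sum {N : ℕ} (hN : 100 ≤ N) {n j a b a' b' : ℤ}
    (ha : |a| ≤ (N:ℤ)) (hb : |b| ≤ (N:ℤ)) (ha' : |a'| ≤ (N:ℤ)) (hb' : |b'| ≤ (N:ℤ))
    (he : P a + P b + P (n - a - b) = j)
    (he' : P a' + P b' + P (n - a' - b') = j)
    (hm : (N:ℤ)^2 - 2*(N:ℤ) ≤ |n - a - b|)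
    (hm' : (N:ℤ)^2 - 2*(N:ℤ) ≤ |n - a' - b'|) :
    a + b = a' + b' := by
  have hN' : (100:ℤ) ≤ (N:ℤ) := by exact_mod_cast hN
  have hNn : (0:ℤ) ≤ (N:ℤ) := by linarith
  have hPa := Pabs hNn ha
  have hPb := Pabs hNn hb
  have hPa' := Pabs hNn ha'
  have hPb' := Pabs hNn hb'
  have hSb : |P a + P b| ≤ 2*((N:ℤ)^3 + 2*(N:ℤ)^2 + 8*(N:ℤ)) := by
    calc |P a + P b| ≤ |P a| + |P b| := abs_add_le _ _
    _ ≤ _ := by linarith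
  have hSb' : |P a' + P b'| ≤ 2*((N:ℤ)^3 + 2*(N:ℤ)^2 + 8*(N:ℤ)) := by
    calc |P a' + P b'| ≤ |P a'| + |P b'| := abs_add_le _ _
    _ ≤ _ := by linarith
  rcases lt_trichotomy (n - a - b) (n - a' - b') with h | h | h
  · exact absurd (gap_contra hN h hSb hSb' (by linarith) hm) (by simp)
  · omega
  · exact absurd (gap_contra hN h hSb' hSb (by linarith) hm') (by simp)

/-- Two solutions with the same sum also have the same product. -/
lemma same_prod {n : ℤ} {a b a' b' : ℤ} (hs : a + b = a' + b')
    (he : P a + P b + P (n - a - b) = P a' + P b' + P (n - a' - b')) :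
    a * b = a' * b' := by
  have hb' : b' = a + b - a' := by omega
  subst hb'
  have h2 : P a + P b = P a' + P (a + b - a') := by
    have h3 : n - a - b = n - a' - (a + b - a') := by ring
    rw [h3] at he
    linarith
  have key : (a*b - a'*(a + b - a')) * (4 - 3*(a+b)) = 0 := by
    unfold P at h2
    linear_combination h2
  have hne : (4 - 3*(a+b)) ≠ 0 := by omega
  rcases mul_eq_zero.mp key with h | h
  · linarith
  · exact absurd h hne

/-- Equal sum and product determine the pair up to order. -/
lemma pair_eq {a b a' b' : ℤ} (hs : a + b = a' + b') (hp : a * b = a' * b') :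
    (a' = a ∧ b' = b) ∨ (a' = b ∧ b' = a) := by
  have key : (a' - a) * (a' - b) = 0 := by linear_combination hp - a' * hs
  rcases mul_eq_zero.mp key with h | h
  · left; constructor <;> omega
  · right; constructor <;> omega

theorem stmt2 :
    ∃ N₀ : ℕ, ∀ (N : ℕ), N₀ ≤ N → ∀ (n j : ℤ),
      ((|n| ≤ (N : ℤ) ^ 2 ∧ (N : ℤ) ^ 6 ≤ |j|) ∨
       ((N : ℤ) ^ 2 ≤ |n| ∧ |j| ≤ (N : ℤ) ^ 6)) →
      rcount N n j ≤ 3 := by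
  refine ⟨100, fun N hN n j hreg => ?_⟩
  unfold rcount
  set S := ((Finset.Icc (-(N : ℤ)) (N : ℤ) ×ˢ Finset.Icc (-(N : ℤ)) (N : ℤ)).filter
    (fun q => P q.1 + P q.2 + P (n - q.1 - q.2) = j)) with hSdef
  have hmem : ∀ q : ℤ × ℤ, q ∈ S → |q.1| ≤ (N:ℤ) ∧ |q.2| ≤ (N:ℤ) ∧
      P q.1 + P q.2 + P (n - q.1 - q.2) = j := by
    intro q hq
    rw [hSdef, Finset.mem_filter, Finset.mem_product, Finset.mem_Icc, Finset.mem_Icc] at hq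
    exact ⟨abs_le.mpr ⟨hq.1.1.1, hq.1.1.2⟩, abs_le.mpr ⟨hq.1.2.1, hq.1.2.2⟩, hq.2⟩
  rcases Finset.eq_empty_or_nonempty S with h | ⟨p, hp⟩
  · rw [h]; simp
  · obtain ⟨hp1, hp2, hp3⟩ := hmem p hp
    have hsub : S ⊆ {p, (p.2, p.1)} := by
      intro q hq
      obtain ⟨hq1, hq2, hq3⟩ := hmem q hq
      have hmp := mbound hN hp1 hp2 hp3 hreg
      have hmq := mbound hN hq1 hq2 hq3 hreg
      have hs : q.1 + q.2 = p.1 + p.2 := same_sum hN hq1 hq2 hp1 hp2 hq3 hp3 hmq hmp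
      have hpr : q.1 * q.2 = p.1 * p.2 := same_prod hs (by rw [hq3, hp3])
      rcases pair_eq hs.symm hpr.symm with ⟨h1, h2⟩ | ⟨h1, h2⟩
      · simp only [Finset.mem_insert, Finset.mem_singleton]
        left; exact Prod.ext h1 h2
      · simp only [Finset.mem_insert, Finset.mem_singleton]
        right; exact Prod.ext h1 h2
    calc S.card ≤ ({p, (p.2, p.1)} : Finset (ℤ × ℤ)).card := Finset.card_le_card hsub
    _ ≤ 2 := Finset.card_insert_le _ _ |>.trans (by simp)
    _ ≤ 3 := by norm_num
end

section
/- For every ε > 0 there exists a constant C_ε > 0, depending only on ε, such that for every natural number N ≥ 1 and all integers n, j, the number of ordered pairs (n₁, n₂) ∈ ℤ² with |n₁| ≤ N and |n₂| ≤ N satisfying P(n₁) + P(n₂) + P(n − n₁ − n₂) = j is at most C_ε N^ε. -/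
open scoped BigOperators

/-- Divisor bound: for every `δ > 0` there is `D` with `d(m) ≤ D m ^ δ`. -/
theorem Dysthe.divisor_bound (δ : ℝ) (hδ : 0 < δ) :
    ∃ D : ℝ, 0 < D ∧ ∀ m : ℕ, m ≠ 0 → (m.divisors.card : ℝ) ≤ D * (m:ℝ) ^ δ := by
  classical
  have hlog : 0 < Real.log 2 := Real.log_pos (by norm_num)
  set K : ℝ := 1 + 1/(δ * Real.log 2) with hK
  have hK1 : 1 ≤ K := by
    have : 0 < 1/(δ * Real.log 2) := by positivity
    rw [hK]; linarith
  set P0 : ℝ := (2:ℝ) ^ (1/δ) with hP0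
  refine ⟨K ^ (⌈P0⌉₊), by positivity, ?_⟩
  intro m hm
  have claim1 : ∀ p a : ℕ, 2 ≤ p → (2:ℝ) ≤ (p:ℝ)^δ → (a + 1 : ℝ) ≤ (p:ℝ) ^ ((a:ℝ) * δ) := by
    intro p a hp h2
    have h0 : (0:ℝ) ≤ (p:ℝ) := by positivity
    calc (a + 1 : ℝ) ≤ (2:ℝ)^(a:ℕ) := by exact_mod_cast (Nat.lt_two_pow_self (n := a))
      _ ≤ ((p:ℝ)^δ)^(a:ℕ) := by apply pow_le_pow_left₀ (by norm_num) h2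
      _ = (p:ℝ) ^ ((a:ℝ) * δ) := by
          rw [← Real.rpow_natCast ((p:ℝ)^δ) a, ← Real.rpow_mul h0, mul_comm]
  have claim2 : ∀ p a : ℕ, 2 ≤ p → (a + 1 : ℝ) ≤ K * (p:ℝ) ^ ((a:ℝ) * δ) := by
    intro p a hp
    have h1 : (1:ℝ) ≤ (p:ℝ) ^ ((a:ℝ) * δ) := by
      apply Real.one_le_rpow (by exact_mod_cast hp.trans' (by norm_num) : (1:ℝ) ≤ (p:ℝ))
        (by positivity)
    have h2 : (a:ℝ) * δ * Real.log 2 ≤ (p:ℝ) ^ ((a:ℝ) * δ) := by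
      have he : (2:ℝ) ^ ((a:ℝ)*δ) = Real.exp ((a:ℝ)*δ*Real.log 2) := by
        rw [Real.rpow_def_of_pos (by norm_num : (0:ℝ) < 2)]; congr 1; ring
      have hle : (a:ℝ)*δ*Real.log 2 + 1 ≤ Real.exp ((a:ℝ)*δ*Real.log 2) := Real.add_one_le_exp _
      have hmono : (2:ℝ)^((a:ℝ)*δ) ≤ (p:ℝ)^((a:ℝ)*δ) :=
        Real.rpow_le_rpow (by norm_num) (by exact_mod_cast hp) (by positivity)
      nlinarith [hle, hmono]
    have hd : 0 < δ * Real.log 2 := by positivity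
    rw [hK, div_eq_mul_inv, one_mul]
    have := mul_le_mul_of_nonneg_right h2 (le_of_lt (inv_pos.mpr hd))
    have hcalc : (a:ℝ) = (a:ℝ)*δ*Real.log 2 * (δ*Real.log 2)⁻¹ := by field_simp
    nlinarith [h1, this]
  have hcard : (m.divisors.card : ℝ)
      = ∏ p ∈ m.primeFactors, ((m.factorization p : ℝ) + 1) := by
    rw [Nat.card_divisors hm]
    push_cast
    rfl
  have hprime : ∀ p ∈ m.primeFactors, 2 ≤ p := fun p hp =>
    (Nat.prime_of_mem_primeFactors hp).two_le
  have hmain : (m.divisors.card : ℝ)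
      ≤ ∏ p ∈ m.primeFactors,
        ((if (p:ℝ) < P0 then K else 1) * (p:ℝ) ^ ((m.factorization p : ℝ) * δ)) := by
    rw [hcard]
    apply Finset.prod_le_prod
    · intro p hp; positivity
    · intro p hp
      by_cases hsmall : (p:ℝ) < P0
      · rw [if_pos hsmall]; exact claim2 p _ (hprime p hp)
      · rw [if_neg hsmall, one_mul]
        apply claim1 p _ (hprime p hp)
        push_neg at hsmall
        have : P0 ^ δ ≤ (p:ℝ) ^ δ :=
          Real.rpow_le_rpow (by positivity) hsmall (le_of_lt hδ)
        rwa [hP0, ← Real.rpow_mul (by norm_num), one_div, inv_mul_cancel₀ (ne_of_gt hδ),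
          Real.rpow_one] at this
  rw [Finset.prod_mul_distrib] at hmain
  have hite : (∏ p ∈ m.primeFactors, (if (p:ℝ) < P0 then K else 1)) ≤ K ^ (⌈P0⌉₊) := by
    rw [← Finset.prod_filter_mul_prod_filter_not m.primeFactors (fun p : ℕ => (p:ℝ) < P0)]
    have e1 : (∏ p ∈ m.primeFactors.filter (fun p : ℕ => (p:ℝ) < P0),
        (if (p:ℝ) < P0 then K else 1))
          = K ^ (m.primeFactors.filter (fun p : ℕ => (p:ℝ) < P0)).card := by
      rw [Finset.prod_congr rfl (fun p hp => if_pos (Finset.mem_filter.mp hp).2),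
        Finset.prod_const]
    have e2 : (∏ p ∈ m.primeFactors.filter (fun p : ℕ => ¬ (p:ℝ) < P0),
        (if (p:ℝ) < P0 then K else 1)) = 1 := by
      rw [Finset.prod_congr rfl (fun p hp => if_neg (Finset.mem_filter.mp hp).2),
        Finset.prod_const, one_pow]
    rw [e1, e2, mul_one]
    apply pow_le_pow_right₀ hK1
    calc (m.primeFactors.filter (fun p : ℕ => (p:ℝ) < P0)).card
        ≤ (Finset.range ⌈P0⌉₊).card := by
          apply Finset.card_le_card
          intro p hp
          simp only [Finset.mem_filter] at hp
          simp only [Finset.mem_range]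
          exact Nat.lt_ceil.mpr hp.2
      _ = ⌈P0⌉₊ := Finset.card_range _
  have hpow : (∏ p ∈ m.primeFactors, (p:ℝ) ^ ((m.factorization p : ℝ) * δ)) = (m:ℝ) ^ δ := by
    have : ∀ p ∈ m.primeFactors, (p:ℝ) ^ ((m.factorization p : ℝ) * δ)
        = (((p ^ (m.factorization p) : ℕ)):ℝ) ^ δ := by
      intro p hp
      push_cast
      rw [← Real.rpow_natCast (p:ℝ) (m.factorization p), ← Real.rpow_mul (by positivity)]
    rw [Finset.prod_congr rfl this, Real.finset_prod_rpow _ _ (fun p _ => by positivity)]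
    congr 1
    rw [← Nat.cast_prod]
    congr 1
    exact Nat.factorization_prod_pow_eq_self hm
  rw [hpow] at hmain
  calc (m.divisors.card : ℝ) ≤ _ := hmain
    _ ≤ K ^ (⌈P0⌉₊) * (m:ℝ)^δ := mul_le_mul_of_nonneg_right hite (by positivity)

lemma Dysthe.key_id (n j n1 n2 : ℤ) (h : P n1 + P n2 + P (n - n1 - n2) = j) :
    (3*(n-n1)-4) * ((3*(n-n2)-4) * (3*(n1+n2)-4)) = 9*(n-2)^3 + 60*(n-2) + 128 - 9*j := by
  simp only [P] at h
  linear_combination (-9) * h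

lemma Dysthe.T0_ne (n j : ℤ) : 9*(n-2)^3 + 60*(n-2) + 128 - 9*j ≠ 0 := by
  obtain ⟨k, hk⟩ : ∃ k, 9*(n-2)^3 + 60*(n-2) + 128 - 9*j = 3*k+2 :=
    ⟨3*(n-2)^3 + 20*(n-2) + 42 - 3*j, by ring⟩
  omega

lemma Dysthe.fiber_le_two (N : ℕ) (n j s : ℤ) :
    (((Finset.Icc (-(N : ℤ)) (N : ℤ) ×ˢ Finset.Icc (-(N : ℤ)) (N : ℤ)).filter
      (fun q => P q.1 + P q.2 + P (n - q.1 - q.2) = j)).filter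
      (fun q => q.1 + q.2 = s)).card ≤ 2 := by
  by_contra hcon
  push_neg at hcon
  obtain ⟨q1, q2, q3, h1, h2, h3, h12, h13, h23⟩ := Finset.two_lt_card_iff.mp hcon
  have mem : ∀ q : ℤ × ℤ,
      q ∈ (((Finset.Icc (-(N : ℤ)) (N : ℤ) ×ˢ Finset.Icc (-(N : ℤ)) (N : ℤ)).filter
      (fun q => P q.1 + P q.2 + P (n - q.1 - q.2) = j)).filter (fun q => q.1 + q.2 = s)) →
      P q.1 + P (s - q.1) + P (n - s) = j ∧ q.2 = s - q.1 := by
    intro q hq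
    simp only [Finset.mem_filter] at hq
    obtain ⟨⟨_, heq⟩, hsum⟩ := hq
    have h2 : q.2 = s - q.1 := by omega
    refine ⟨?_, h2⟩
    rw [h2] at heq
    have harg : n - q.1 - (s - q.1) = n - s := by ring
    rwa [harg] at heq
  obtain ⟨e1, f1⟩ := mem q1 h1
  obtain ⟨e2, f2⟩ := mem q2 h2
  obtain ⟨e3, f3⟩ := mem q3 h3
  have hx12 : q1.1 ≠ q2.1 := by
    intro h; apply h12; apply Prod.ext h; rw [f1, f2, h]
  have hx13 : q1.1 ≠ q3.1 := by
    intro h; apply h13; apply Prod.ext h; rw [f1, f3, h]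
  have hx23 : q2.1 ≠ q3.1 := by
    intro h; apply h23; apply Prod.ext h; rw [f2, f3, h]
  set x := q1.1; set y := q2.1; set z := q3.1
  have f12 : (x - y) * ((3*s-4)*(x+y) - (3*s^2-4*s)) = 0 := by
    simp only [P] at e1 e2
    linear_combination e1 - e2
  have f13 : (x - z) * ((3*s-4)*(x+z) - (3*s^2-4*s)) = 0 := by
    simp only [P] at e1 e3
    linear_combination e1 - e3
  have g12 : (3*s-4)*(x+y) = 3*s^2-4*s := by
    rcases mul_eq_zero.mp f12 with h | h
    · exact absurd (sub_eq_zero.mp h) hx12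
    · linarith [sub_eq_zero.mp h]
  have g13 : (3*s-4)*(x+z) = 3*s^2-4*s := by
    rcases mul_eq_zero.mp f13 with h | h
    · exact absurd (sub_eq_zero.mp h) hx13
    · linarith [sub_eq_zero.mp h]
  have hyz : (3*s-4)*(y-z) = 0 := by linear_combination g12 - g13
  rcases mul_eq_zero.mp hyz with h | h
  · omega
  · exact hx23 (by omega)

lemma Dysthe.abs_factor_lb (n x : ℤ) (N : ℕ) (hx : |x| ≤ N) :
    3*|n| - 3*(N:ℤ) - 4 ≤ |3*(n-x)-4| := by
  rw [abs_le] at hx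
  rcases abs_cases n with ⟨h1, _⟩ | ⟨h1, _⟩
  · apply le_abs.mpr; left; omega
  · apply le_abs.mpr; right; omega

lemma Dysthe.abs_factor_ub (n x : ℤ) (N : ℕ) (hx : |x| ≤ N) :
    |3*(n-x)-4| ≤ 3*|n| + 3*(N:ℤ) + 4 := by
  rw [abs_le] at hx ⊢
  constructor <;> rcases abs_cases n with ⟨h1, _⟩ | ⟨h1, _⟩ <;> omega

lemma Dysthe.step_lemma (An NN : ℤ) (hN : 1 ≤ NN) (hAn : 7*NN^2 + 1 ≤ An) :
    (6*NN+4) * ((3*An+3*NN+4)*(3*An+3*NN+4) - (3*An-3*NN-4)*(3*An-3*NN-4))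
      ≤ 30 * ((3*An-3*NN-4)*(3*An-3*NN-4)) := by
  have hAnpos : (0:ℤ) ≤ An := by nlinarith
  nlinarith [mul_nonneg hAnpos (show (0:ℤ) ≤ 624*NN^2 - 432*NN - 72 by nlinarith),
    mul_le_mul_of_nonneg_left hAn (show (0:ℤ) ≤ 120*An by linarith)]

lemma Dysthe.fin_lemma (cs ct L U T NN : ℤ) (hLpos : 0 < L) (e1 : cs * (L*L) ≤ T)
    (e2 : T ≤ ct * (U*U)) (hct : ct ≤ 6*NN+4) (hULnn : 0 ≤ U*U - L*L)
    (hstep : (6*NN+4) * (U*U - L*L) ≤ 30*(L*L)) :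
    cs ≤ ct + 30 := by
  nlinarith [mul_le_mul_of_nonneg_right hct hULnn, mul_pos hLpos hLpos]

lemma Dysthe.UL_nn (An NN : ℤ) (hN : 1 ≤ NN) (hAnpos : 0 ≤ An) :
    (0:ℤ) ≤ (3*An+3*NN+4)*(3*An+3*NN+4) - (3*An-3*NN-4)*(3*An-3*NN-4) := by
  nlinarith [mul_nonneg (show (0:ℤ) ≤ 6*NN+8 by linarith) (show (0:ℤ) ≤ 6*An by linarith)]

lemma Dysthe.L_pos (An NN : ℤ) (hN : 1 ≤ NN) (hAn : 7*NN^2 + 1 ≤ An) :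
    (0:ℤ) < 3*An - 3*NN - 4 := by nlinarith

theorem stmt3 :
    ∀ ε : ℝ, 0 < ε → ∃ C : ℝ, 0 < C ∧
      ∀ (N : ℕ), 1 ≤ N → ∀ (n j : ℤ),
        (rcount N n j : ℝ) ≤ C * (N : ℝ) ^ ε := by
  intro ε hε
  obtain ⟨D, hD, hDiv⟩ := Dysthe.divisor_bound (ε/5) (by positivity)
  refine ⟨122 + 2 * D * (7840:ℝ) ^ (ε/5), by positivity, ?_⟩
  intro N hN n j
  have hC1 : (0:ℝ) ≤ 2 * D * (7840:ℝ) ^ (ε/5) := by positivity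
  have hN1 : (1:ℝ) ≤ (N:ℝ) := by exact_mod_cast hN
  have hNZ : (1:ℤ) ≤ (N:ℤ) := by exact_mod_cast hN
  have hNpow : (1:ℝ) ≤ (N:ℝ) ^ ε := Real.one_le_rpow hN1 (le_of_lt hε)
  have hNpow0 : (0:ℝ) ≤ (N:ℝ) ^ ε := by positivity
  set S := ((Finset.Icc (-(N : ℤ)) (N : ℤ) ×ˢ Finset.Icc (-(N : ℤ)) (N : ℤ)).filter
    (fun q => P q.1 + P q.2 + P (n - q.1 - q.2) = j)) with hS
  have hrc : rcount N n j = S.card := rfl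
  set I := S.image (fun q : ℤ × ℤ => q.1 + q.2) with hI
  have hcount : S.card ≤ 2 * I.card := by
    rw [Finset.card_eq_sum_card_fiberwise
      (f := fun q : ℤ × ℤ => q.1 + q.2) (t := I) (fun q hq => Finset.mem_image_of_mem _ hq)]
    calc ∑ s ∈ I, (S.filter (fun q => q.1 + q.2 = s)).card
        ≤ ∑ _s ∈ I, 2 := Finset.sum_le_sum (fun s _ => Dysthe.fiber_le_two N n j s)
      _ = 2 * I.card := by rw [Finset.sum_const, smul_eq_mul, mul_comm]
  set T0 : ℤ := 9*(n-2)^3 + 60*(n-2) + 128 - 9*j with hT0def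
  have hT0ne : T0 ≠ 0 := Dysthe.T0_ne n j
  have hsol : ∀ s ∈ I, ∃ x y : ℤ, |x| ≤ N ∧ |y| ≤ N ∧ x + y = s ∧
      (3*(n-x)-4) * ((3*(n-y)-4) * (3*s-4)) = T0 := by
    intro s hs
    obtain ⟨q, hq, hqs⟩ := Finset.mem_image.mp hs
    rw [hS] at hq
    simp only [Finset.mem_filter, Finset.mem_product, Finset.mem_Icc] at hq
    refine ⟨q.1, q.2, by rw [abs_le]; exact hq.1.1, by rw [abs_le]; exact hq.1.2, hqs, ?_⟩
    rw [← hqs]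
    exact Dysthe.key_id n j q.1 q.2 hq.2
  have hinj : ∀ s t : ℤ, (3*s-4).natAbs = (3*t-4).natAbs → s = t := by
    intro s t h
    have := Int.natAbs_eq_natAbs_iff.mp h
    omega
  have hrc2 : (rcount N n j : ℝ) ≤ 2 * (I.card : ℝ) := by
    rw [hrc]; exact_mod_cast hcount
  clear_value S T0
  clear hcount hrc hS hT0def hI
  rcases Finset.eq_empty_or_nonempty I with hIe | ⟨s₀, hs₀⟩
  · rw [hIe] at hrc2
    simp only [Finset.card_empty, Nat.cast_zero, mul_zero] at hrc2
    have : (0:ℝ) ≤ (122 + 2 * D * (7840:ℝ) ^ (ε/5)) * (N:ℝ)^ε := by positivity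
    linarith [Nat.cast_nonneg (α := ℝ) (rcount N n j)]
  by_cases hn7 : |n| ≤ 7*(N:ℤ)^2
  · -- small n case: divisor bound
    obtain ⟨x, y, hx, hy, hxy, hid⟩ := hsol s₀ hs₀
    have hfac : ∀ z : ℤ, |z| ≤ N → |3*(n-z)-4| ≤ 28*(N:ℤ)^2 := by
      intro z hz
      rw [abs_le] at hz hn7 ⊢
      constructor <;>
        nlinarith [mul_nonneg (show (0:ℤ) ≤ (N:ℤ)-1 by omega)
          (show (0:ℤ) ≤ 7*(N:ℤ)+4 by omega)]
    have hc : |3*s₀-4| ≤ 10*(N:ℤ) := by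
      rw [abs_le] at hx hy ⊢
      omega
    have habs : |T0| ≤ 7840*(N:ℤ)^5 := by
      calc |T0| = |3*(n-x)-4| * (|3*(n-y)-4| * |3*s₀-4|) := by
            rw [← hid, abs_mul, abs_mul]
        _ ≤ 28*(N:ℤ)^2 * (28*(N:ℤ)^2 * (10*(N:ℤ))) := by
            apply mul_le_mul (hfac x hx) ?_ (by positivity) (by positivity)
            apply mul_le_mul (hfac y hy) hc (abs_nonneg _) (by positivity)
        _ = 7840*(N:ℤ)^5 := by ring
    have hIcard : I.card ≤ (T0.natAbs).divisors.card := by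
      apply Finset.card_le_card_of_injOn (fun s => (3*s-4).natAbs)
      · intro s hs
        obtain ⟨x', y', hx', hy', hxy', hid'⟩ := hsol s hs
        rw [Finset.mem_coe, Nat.mem_divisors]
        refine ⟨Int.natAbs_dvd_natAbs.mpr ⟨(3*(n-x')-4) * (3*(n-y')-4), by rw [← hid']; ring⟩,
          Int.natAbs_ne_zero.mpr hT0ne⟩
      · intro s _ t _ h
        exact hinj s t h
    have hdiv := hDiv T0.natAbs (Int.natAbs_ne_zero.mpr hT0ne)
    have hcast : ((T0.natAbs : ℕ) : ℝ) ≤ 7840*((N:ℝ))^(5:ℕ) := by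
      rw [Nat.cast_natAbs]
      exact_mod_cast habs
    have hrpow : ((T0.natAbs:ℝ)) ^ (ε/5) ≤ (7840*((N:ℝ))^(5:ℕ)) ^ (ε/5) :=
      Real.rpow_le_rpow (by positivity) hcast (by positivity)
    have h5 : ((5:ℕ):ℝ) * (ε/5) = ε := by push_cast; ring
    have heq : (7840*((N:ℝ))^(5:ℕ)) ^ (ε/5) = (7840:ℝ)^(ε/5) * (N:ℝ)^ε := by
      rw [Real.mul_rpow (by norm_num) (by positivity), ← Real.rpow_natCast (N:ℝ) 5,
        ← Real.rpow_mul (by positivity), h5]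
    calc (rcount N n j : ℝ) ≤ 2 * (I.card : ℝ) := hrc2
      _ ≤ 2 * ((T0.natAbs).divisors.card : ℝ) := by
          have : (I.card : ℝ) ≤ ((T0.natAbs).divisors.card : ℝ) := by exact_mod_cast hIcard
          linarith
      _ ≤ 2 * (D * ((T0.natAbs:ℝ)) ^ (ε/5)) := by linarith
      _ ≤ 2 * (D * ((7840:ℝ)^(ε/5) * (N:ℝ)^ε)) := by
          rw [← heq]
          have := mul_le_mul_of_nonneg_left hrpow (le_of_lt hD)
          linarith
      _ = 2 * D * (7840:ℝ)^(ε/5) * (N:ℝ)^ε := by ring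
      _ ≤ (122 + 2 * D * (7840:ℝ)^(ε/5)) * (N:ℝ)^ε := by nlinarith [hNpow0]
  · -- large n case: constant bound
    push_neg at hn7
    have hAnlb : 7*(N:ℤ)^2 + 1 ≤ |n| := hn7
    have hLpos : (0:ℤ) < 3*|n| - 3*(N:ℤ) - 4 := Dysthe.L_pos _ _ hNZ hAnlb
    have key : ∀ s ∈ I, ∀ t ∈ I, ((3*s-4).natAbs : ℤ) ≤ ((3*t-4).natAbs : ℤ) + 30 := by
      intro s hs t ht
      obtain ⟨x, y, hx, hy, hxy, hid⟩ := hsol s hs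
      obtain ⟨x', y', hx', hy', hxy', hid'⟩ := hsol t ht
      have e1 : |3*s-4| * ((3*|n| - 3*(N:ℤ) - 4) * (3*|n| - 3*(N:ℤ) - 4)) ≤ |T0| := by
        calc |3*s-4| * ((3*|n| - 3*(N:ℤ) - 4) * (3*|n| - 3*(N:ℤ) - 4))
            ≤ |3*s-4| * (|3*(n-x)-4| * |3*(n-y)-4|) := by
              apply mul_le_mul_of_nonneg_left ?_ (abs_nonneg _)
              exact mul_le_mul (Dysthe.abs_factor_lb n x N hx) (Dysthe.abs_factor_lb n y N hy)
                (le_of_lt hLpos) (abs_nonneg _)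
          _ = |3*(n-x)-4| * (|3*(n-y)-4| * |3*s-4|) := by ring
          _ = |T0| := by rw [← hid, abs_mul, abs_mul]
      have e2 : |T0| ≤ |3*t-4| * ((3*|n| + 3*(N:ℤ) + 4) * (3*|n| + 3*(N:ℤ) + 4)) := by
        calc |T0| = |3*(n-x')-4| * (|3*(n-y')-4| * |3*t-4|) := by
              rw [← hid', abs_mul, abs_mul]
          _ = |3*t-4| * (|3*(n-x')-4| * |3*(n-y')-4|) := by ring
          _ ≤ |3*t-4| * ((3*|n| + 3*(N:ℤ) + 4) * (3*|n| + 3*(N:ℤ) + 4)) := by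
              apply mul_le_mul_of_nonneg_left ?_ (abs_nonneg _)
              exact mul_le_mul (Dysthe.abs_factor_ub n x' N hx') (Dysthe.abs_factor_ub n y' N hy')
                (abs_nonneg _) (by positivity)
      have hct : |3*t-4| ≤ 6*(N:ℤ)+4 := by
        rw [abs_le] at hx' hy' ⊢
        omega
      have hULnn := Dysthe.UL_nn |n| (N:ℤ) hNZ (abs_nonneg n)
      have hstep := Dysthe.step_lemma |n| (N:ℤ) hNZ hAnlb
      have hfin : |3*s-4| ≤ |3*t-4| + 30 :=
        Dysthe.fin_lemma _ _ _ _ _ _ hLpos e1 e2 hct hULnn hstep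
      have h1 : ((3*s-4).natAbs : ℤ) = |3*s-4| := (Int.abs_eq_natAbs _).symm
      have h2 : ((3*t-4).natAbs : ℤ) = |3*t-4| := (Int.abs_eq_natAbs _).symm
      omega
    have hIcard : I.card ≤ 61 := by
      have h1 : I.card ≤ (Finset.Icc ((3*s₀-4).natAbs - 30) ((3*s₀-4).natAbs + 30)).card := by
        apply Finset.card_le_card_of_injOn (fun s => (3*s-4).natAbs)
        · intro s hs
          rw [Finset.mem_coe, Finset.mem_Icc]; beta_reduce
          have k1 := key s hs s₀ hs₀
          have k2 := key s₀ hs₀ s hs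
          omega
        · intro s _ t _ h
          exact hinj s t h
      have h2 : (Finset.Icc ((3*s₀-4).natAbs - 30) ((3*s₀-4).natAbs + 30)).card ≤ 61 := by
        rw [Nat.card_Icc]
        omega
      omega
    calc (rcount N n j : ℝ) ≤ 2 * (I.card : ℝ) := hrc2
      _ ≤ 122 := by
          have : (I.card : ℝ) ≤ 61 := by exact_mod_cast hIcard
          linarith
      _ ≤ (122 + 2 * D * (7840:ℝ)^(ε/5)) * (N:ℝ)^ε := by
          have h := mul_le_mul_of_nonneg_left hNpow
            (show (0:ℝ) ≤ 122 + 2*D*(7840:ℝ)^(ε/5) by linarith)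
          rw [mul_one] at h
          linarith
end

section
/- For every ε > 0 there exists a constant C_ε > 0 such that for every natural number N ≥ 1 and every sequence a : ℤ → ℂ supported in {n : |n| ≤ N}, the function u(x,t) = Σ_{|n|≤N} a(n) e^{i(nx + P(n)t)} satisfies ‖u‖_{L⁶(T²)} ≤ C_ε N^ε (Σ_{|n|≤N} |a(n)|²)^{1/2}. -/
open scoped BigOperators

noncomputable section

/-- The solution `u(x,t) = Σ_n a(n) e^{i(nx + P(n)t)}` of the linearized periodic
Dysthe equation with initial datum `u₀(x) = Σ_n a(n) e^{inx}`. -/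
def sol (a : ℤ →₀ ℂ) (x t : ℝ) : ℂ :=
  ∑ n ∈ a.support, a n * Complex.exp (Complex.I * (((n : ℝ) * x + (P n : ℝ) * t : ℝ) : ℂ))

/-- `L^p` norm on the torus `T² = [0,2π]_x × [0,2π]_t`. -/
def LpNorm (p : ℝ) (u : ℝ → ℝ → ℂ) : ℝ :=
  (∫ x in (0:ℝ)..(2 * Real.pi), ∫ t in (0:ℝ)..(2 * Real.pi), ‖u x t‖ ^ p) ^ (1 / p)

/-- Sobolev `H^σ` norm of the initial datum with Fourier coefficients `a`. -/
def HNorm (σ : ℝ) (a : ℤ →₀ ℂ) : ℝ :=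
  (∑ n ∈ a.support, (1 + |(n : ℝ)|) ^ (2 * σ) * ‖a n‖ ^ 2) ^ ((1:ℝ) / 2)

def mm (p : ℤ×ℤ×ℤ) : ℤ := p.1+p.2.1+p.2.2
def qq (p : ℤ×ℤ×ℤ) : ℤ := P p.1+P p.2.1+P p.2.2
def AA (a : ℤ →₀ ℂ) (p : ℤ×ℤ×ℤ) : ℂ := a p.1 * a p.2.1 * a p.2.2

lemma cube_expand (a : ℤ →₀ ℂ) (x t : ℝ) :
    (sol a x t)^3 = ∑ p ∈ a.support ×ˢ a.support ×ˢ a.support,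
      AA a p * Complex.exp (Complex.I * ((mm p : ℂ) * x + (qq p : ℂ) * t)) := by
  set S := a.support
  set f : ℤ → ℂ := fun n => a n * Complex.exp (Complex.I * (((n : ℝ) * x + (P n : ℝ) * t : ℝ) : ℂ)) with hf
  have h3 : (sol a x t)^3 = (∑ n ∈ S, f n) * ((∑ n ∈ S, f n) * (∑ n ∈ S, f n)) := by
    rw [sol]; ring
  rw [h3, Finset.sum_mul_sum, Finset.sum_mul_sum, Finset.sum_product]
  apply Finset.sum_congr rfl
  intro n1 _
  rw [Finset.sum_product]
  apply Finset.sum_congr rfl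
  intro n2 _
  rw [Finset.mul_sum]
  apply Finset.sum_congr rfl
  intro n3 _
  simp only [hf, AA, mm, qq]
  rw [show Complex.I * (((n1+n2+n3 : ℤ) : ℂ) * x + ((P n1 + P n2 + P n3 : ℤ) : ℂ) * t)
      = Complex.I * (((n1 : ℝ) * x + (P n1 : ℝ) * t : ℝ) : ℂ)
      + (Complex.I * (((n2 : ℝ) * x + (P n2 : ℝ) * t : ℝ) : ℂ)
      + Complex.I * (((n3 : ℝ) * x + (P n3 : ℝ) * t : ℝ) : ℂ)) from by push_cast; ring]
  rw [Complex.exp_add, Complex.exp_add]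
  ring

open Complex in
lemma norm_six (a : ℤ →₀ ℂ) (x t : ℝ) :
    (‖sol a x t‖^(6:ℕ) : ℝ)
      = (∑ p ∈ a.support ×ˢ a.support ×ˢ a.support,
         ∑ p' ∈ a.support ×ˢ a.support ×ˢ a.support,
          (AA a p * (starRingEnd ℂ) (AA a p')) *
            (Complex.exp (Complex.I * ((mm p - mm p' : ℤ) : ℂ) * x) *
             Complex.exp (Complex.I * ((qq p - qq p' : ℤ) : ℂ) * t))).re := by
  have h1 : (‖sol a x t‖^(6:ℕ) : ℝ) = ((sol a x t)^3 * (starRingEnd ℂ) ((sol a x t)^3)).re := by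
    rw [Complex.mul_conj, Complex.ofReal_re, Complex.normSq_eq_norm_sq,
      norm_pow]
    ring
  rw [h1, cube_expand, map_sum, Finset.sum_mul_sum]
  congr 1
  apply Finset.sum_congr rfl
  intro p _
  apply Finset.sum_congr rfl
  intro p' _
  have harg : (starRingEnd ℂ) (Complex.I * ((mm p' : ℂ) * x + (qq p' : ℂ) * t))
      = -(Complex.I * ((mm p' : ℂ) * x + (qq p' : ℂ) * t)) := by
    have h2 : ((mm p' : ℂ) * x + (qq p' : ℂ) * t) = (((mm p' : ℝ) * x + (qq p' : ℝ) * t : ℝ) : ℂ) := by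
      push_cast; ring
    rw [h2, map_mul, Complex.conj_I, Complex.conj_ofReal]; ring
  rw [map_mul, ← Complex.exp_conj, harg]
  have hexp : Complex.exp (Complex.I * ((mm p : ℂ) * x + (qq p : ℂ) * t)) *
      Complex.exp (-(Complex.I * ((mm p' : ℂ) * x + (qq p' : ℂ) * t)))
      = Complex.exp (Complex.I * ((mm p - mm p' : ℤ) : ℂ) * x) *
        Complex.exp (Complex.I * ((qq p - qq p' : ℤ) : ℂ) * t) := by
    rw [← Complex.exp_add, ← Complex.exp_add]
    congr 1
    push_cast
    ring
  rw [mul_mul_mul_comm, hexp]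
lemma eint (k : ℤ) : (∫ x in (0:ℝ)..(2*Real.pi), Complex.exp (Complex.I * k * x))
    = if k = 0 then (2*Real.pi : ℂ) else 0 := by
  rcases eq_or_ne k 0 with h | h
  · simp [h]
  · rw [if_neg h, integral_exp_mul_complex (by simp [Complex.ext_iff, h, Complex.I_ne_zero])]
    have : Complex.I * (k:ℂ) * ((2*Real.pi : ℝ):ℂ) = (k:ℤ) * (2 * Real.pi * Complex.I) := by
      push_cast; ring
    rw [this, Complex.exp_int_mul_two_pi_mul_I]
    simp

lemma contaux (k : ℤ) (c : ℂ) : Continuous (fun s : ℝ => c * Complex.exp (Complex.I * (k:ℂ) * s)) := by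
  apply continuous_const.mul
  exact Complex.continuous_exp.comp (continuous_const.mul Complex.continuous_ofReal)

lemma rekey (F : ℝ → ℂ) (a b : ℝ) (hF : IntervalIntegrable F MeasureTheory.volume a b) :
    (∫ t in a..b, (F t).re) = (∫ t in a..b, F t).re :=
  ContinuousLinearMap.intervalIntegral_comp_comm Complex.reCLM hF

open Complex in
lemma int_eq (a : ℤ →₀ ℂ) :
    (∫ x in (0:ℝ)..(2*Real.pi), ∫ t in (0:ℝ)..(2*Real.pi), (‖sol a x t‖^(6:ℕ) : ℝ))
    = (∑ p ∈ a.support ×ˢ a.support ×ˢ a.support,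
       ∑ p' ∈ a.support ×ˢ a.support ×ˢ a.support,
        (AA a p * (starRingEnd ℂ) (AA a p')) *
          ((if mm p - mm p' = 0 then (2*Real.pi:ℂ) else 0) *
           (if qq p - qq p' = 0 then (2*Real.pi:ℂ) else 0))).re := by
  have hcon130 : ∀ (x : ℝ), Continuous (fun t : ℝ => ∑ p ∈ a.support ×ˢ a.support ×ˢ a.support,
      ∑ p' ∈ a.support ×ˢ a.support ×ˢ a.support,
        (AA a p * (starRingEnd ℂ) (AA a p')) *
          (Complex.exp (Complex.I * ((mm p - mm p' : ℤ) : ℂ) * x) *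
           Complex.exp (Complex.I * ((qq p - qq p' : ℤ) : ℂ) * t))) := by
    intro x
    apply continuous_finset_sum; intro p _
    apply continuous_finset_sum; intro p' _
    simpa [mul_assoc] using contaux (qq p - qq p') ((AA a p * (starRingEnd ℂ) (AA a p')) *
      Complex.exp (Complex.I * ((mm p - mm p' : ℤ) : ℂ) * x))
  have inner : ∀ x : ℝ, (∫ t in (0:ℝ)..(2*Real.pi), (‖sol a x t‖^(6:ℕ) : ℝ))
      = (∑ p ∈ a.support ×ˢ a.support ×ˢ a.support,
         ∑ p' ∈ a.support ×ˢ a.support ×ˢ a.support,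
          ((AA a p * (starRingEnd ℂ) (AA a p')) *
            Complex.exp (Complex.I * ((mm p - mm p' : ℤ) : ℂ) * x)) *
            (if qq p - qq p' = 0 then (2*Real.pi:ℂ) else 0)).re := by
    intro x
    simp only [norm_six]
    rw [rekey _ _ _ ((hcon130 x).intervalIntegrable _ _)]
    congr 1
    rw [intervalIntegral.integral_finset_sum (fun p _ => by
      apply Continuous.intervalIntegrable
      apply continuous_finset_sum; intro p' _
      simpa [mul_assoc] using contaux (qq p - qq p') ((AA a p * (starRingEnd ℂ) (AA a p')) *
        Complex.exp (Complex.I * ((mm p - mm p' : ℤ) : ℂ) * x)))]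
    apply Finset.sum_congr rfl
    intro p _
    rw [intervalIntegral.integral_finset_sum (fun p' _ => by
      apply Continuous.intervalIntegrable
      simpa [mul_assoc] using contaux (qq p - qq p') ((AA a p * (starRingEnd ℂ) (AA a p')) *
        Complex.exp (Complex.I * ((mm p - mm p' : ℤ) : ℂ) * x)))]
    apply Finset.sum_congr rfl
    intro p' _
    rw [show (fun t : ℝ => (AA a p * (starRingEnd ℂ) (AA a p')) *
          (Complex.exp (Complex.I * ((mm p - mm p' : ℤ) : ℂ) * x) *
           Complex.exp (Complex.I * ((qq p - qq p' : ℤ) : ℂ) * t)))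
      = (fun t : ℝ => ((AA a p * (starRingEnd ℂ) (AA a p')) *
          Complex.exp (Complex.I * ((mm p - mm p' : ℤ) : ℂ) * x)) *
           Complex.exp (Complex.I * ((qq p - qq p' : ℤ) : ℂ) * t)) from by
        funext t; ring]
    rw [intervalIntegral.integral_const_mul, eint]
  simp only [inner]
  have hcont2 : Continuous (fun x : ℝ => ∑ p ∈ a.support ×ˢ a.support ×ˢ a.support,
      ∑ p' ∈ a.support ×ˢ a.support ×ˢ a.support,
        ((AA a p * (starRingEnd ℂ) (AA a p')) *
          Complex.exp (Complex.I * ((mm p - mm p' : ℤ) : ℂ) * x)) *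
          (if qq p - qq p' = 0 then (2*Real.pi:ℂ) else 0)) := by
    apply continuous_finset_sum; intro p _
    apply continuous_finset_sum; intro p' _
    exact (contaux (mm p - mm p') _).mul continuous_const
  rw [rekey _ _ _ (hcont2.intervalIntegrable _ _)]
  congr 1
  rw [intervalIntegral.integral_finset_sum (fun p _ => by
    apply Continuous.intervalIntegrable
    apply continuous_finset_sum; intro p' _
    exact (contaux (mm p - mm p') _).mul continuous_const)]
  apply Finset.sum_congr rfl
  intro p _
  rw [intervalIntegral.integral_finset_sum (fun p' _ => by
    apply Continuous.intervalIntegrable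
    exact (contaux (mm p - mm p') _).mul continuous_const)]
  apply Finset.sum_congr rfl
  intro p' _
  rw [show (fun x : ℝ => ((AA a p * (starRingEnd ℂ) (AA a p')) *
        Complex.exp (Complex.I * ((mm p - mm p' : ℤ) : ℂ) * x)) *
        (if qq p - qq p' = 0 then (2*Real.pi:ℂ) else 0))
    = (fun x : ℝ => ((AA a p * (starRingEnd ℂ) (AA a p')) *
        (if qq p - qq p' = 0 then (2*Real.pi:ℂ) else 0)) *
        Complex.exp (Complex.I * ((mm p - mm p' : ℤ) : ℂ) * x)) from by funext x; ring]
  rw [intervalIntegral.integral_const_mul, eint]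
  ring

open Complex in
lemma sum_eq_fibers (a : ℤ →₀ ℂ) :
    (∑ p ∈ a.support ×ˢ a.support ×ˢ a.support,
       ∑ p' ∈ a.support ×ˢ a.support ×ˢ a.support,
        (AA a p * (starRingEnd ℂ) (AA a p')) *
          ((if mm p - mm p' = 0 then (2*Real.pi:ℂ) else 0) *
           (if qq p - qq p' = 0 then (2*Real.pi:ℂ) else 0))).re
    = (2*Real.pi)^2 * ∑ k ∈ (a.support ×ˢ a.support ×ˢ a.support).image (fun p => (mm p, qq p)),
        ‖∑ p ∈ (a.support ×ˢ a.support ×ˢ a.support).filter (fun p => (mm p, qq p) = k), AA a p‖^2 := by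
  set T := a.support ×ˢ a.support ×ˢ a.support with hT
  set K : (ℤ×ℤ×ℤ) → ℤ×ℤ := fun p => (mm p, qq p) with hK
  set c : ℤ×ℤ → ℂ := fun k => ∑ p ∈ T.filter (fun p => K p = k), AA a p with hc
  have step1 : ∀ p p' : ℤ×ℤ×ℤ,
      (AA a p * (starRingEnd ℂ) (AA a p')) *
        ((if mm p - mm p' = 0 then (2*Real.pi:ℂ) else 0) *
         (if qq p - qq p' = 0 then (2*Real.pi:ℂ) else 0))
      = if K p' = K p then (AA a p * (starRingEnd ℂ) (AA a p')) * ((2*Real.pi:ℂ))^2 else 0 := by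
    intro p p'
    rcases eq_or_ne (K p') (K p) with h | h
    · rw [if_pos h]
      rw [hK, Prod.ext_iff] at h
      simp only at h
      rw [if_pos (by omega : mm p - mm p' = 0), if_pos (by omega : qq p - qq p' = 0)]
      ring
    · rw [if_neg h]
      by_cases h1 : mm p - mm p' = 0
      · have h2 : ¬ (qq p - qq p' = 0) := by
          intro h2
          exact h (by rw [hK, Prod.ext_iff]; constructor <;> (simp only; omega))
        rw [if_pos h1, if_neg h2]; ring
      · rw [if_neg h1]; ring
  have step2 : (∑ p ∈ T, ∑ p' ∈ T,
      (AA a p * (starRingEnd ℂ) (AA a p')) *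
        ((if mm p - mm p' = 0 then (2*Real.pi:ℂ) else 0) *
         (if qq p - qq p' = 0 then (2*Real.pi:ℂ) else 0)))
      = ∑ k ∈ T.image K, (c k * (starRingEnd ℂ) (c k)) * ((2*Real.pi:ℂ))^2 := by
    calc (∑ p ∈ T, ∑ p' ∈ T, (AA a p * (starRingEnd ℂ) (AA a p')) *
        ((if mm p - mm p' = 0 then (2*Real.pi:ℂ) else 0) *
         (if qq p - qq p' = 0 then (2*Real.pi:ℂ) else 0)))
        = ∑ p ∈ T, ∑ p' ∈ T, if K p' = K p
            then (AA a p * (starRingEnd ℂ) (AA a p')) * ((2*Real.pi:ℂ))^2 else 0 := by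
          apply Finset.sum_congr rfl; intro p _
          apply Finset.sum_congr rfl; intro p' _
          exact step1 p p'
      _ = ∑ p ∈ T, (AA a p * (starRingEnd ℂ) (c (K p))) * ((2*Real.pi:ℂ))^2 := by
          apply Finset.sum_congr rfl; intro p _
          rw [← Finset.sum_filter]
          rw [show c (K p) = ∑ p' ∈ T.filter (fun p' => K p' = K p), AA a p' from rfl,
            map_sum, Finset.mul_sum, Finset.sum_mul]
      _ = ∑ k ∈ T.image K, (c k * (starRingEnd ℂ) (c k)) * ((2*Real.pi:ℂ))^2 := by
          rw [← Finset.sum_fiberwise_of_maps_to (fun p hp => Finset.mem_image_of_mem K hp)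
            (fun p => (AA a p * (starRingEnd ℂ) (c (K p))) * ((2*Real.pi:ℂ))^2)]
          apply Finset.sum_congr rfl; intro k _
          have : ∀ p ∈ T.filter (fun p => K p = k),
              (AA a p * (starRingEnd ℂ) (c (K p))) * ((2*Real.pi:ℂ))^2
              = (AA a p * (starRingEnd ℂ) (c k)) * ((2*Real.pi:ℂ))^2 := by
            intro p hp
            rw [(Finset.mem_filter.mp hp).2]
          rw [Finset.sum_congr rfl this, ← Finset.sum_mul, ← Finset.sum_mul,
            show (∑ i ∈ T.filter (fun p => K p = k), AA a i) = c k from rfl]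
  rw [step2]
  rw [Complex.re_sum]
  rw [Finset.mul_sum]
  apply Finset.sum_congr rfl
  intro k _
  rw [Complex.mul_conj]
  rw [show ((2*Real.pi:ℂ))^2 = (((2*Real.pi)^2 : ℝ) : ℂ) from by push_cast; ring]
  rw [← Complex.ofReal_mul, Complex.ofReal_re, Complex.normSq_eq_norm_sq]
  ring


lemma pow_succ_le_aux (k α : ℕ) (hk : 1 ≤ k) {p : ℝ} (hp : 2 ≤ p) :
    (α + 1 : ℝ) ≤ 3 * k * p ^ ((α : ℝ) / k) := by
  have hk0 : (0:ℝ) < k := by exact_mod_cast hk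
  have h2 : (2:ℝ) ^ ((α : ℝ) / k) ≤ p ^ ((α : ℝ) / k) :=
    Real.rpow_le_rpow (by norm_num) hp (by positivity)
  have hexp : 1 + (α : ℝ) / k * Real.log 2 ≤ (2:ℝ) ^ ((α : ℝ) / k) := by
    rw [Real.rpow_def_of_pos (by norm_num)]
    have := Real.add_one_le_exp (Real.log 2 * ((α : ℝ) / k))
    linarith [this]
  have hlog : (1:ℝ)/2 ≤ Real.log 2 := by
    have := Real.log_two_gt_d9; linarith
  have h3 : 1 + (α : ℝ) / (2*k) ≤ (2:ℝ) ^ ((α : ℝ) / k) := by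
    have : (α : ℝ) / (2*k) ≤ (α : ℝ) / k * Real.log 2 := by
      rw [div_mul_eq_mul_div, div_le_div_iff₀ (by positivity) hk0] at *
      have : (α:ℝ) * (1/2) ≤ (α:ℝ) * Real.log 2 := by
        apply mul_le_mul_of_nonneg_left hlog (by positivity)
      nlinarith [Nat.cast_nonneg (α := ℝ) α]
    linarith
  have hcalc : 3*(k:ℝ)*(1 + (α:ℝ)/(2*k)) = 3*k + 3*(α:ℝ)/2 := by
    field_simp
  have hk1 : (1:ℝ) ≤ k := by exact_mod_cast hk
  calc (α + 1 : ℝ) ≤ 3 * k * (1 + (α : ℝ) / (2*k)) := by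
        rw [hcalc]
        have := Nat.cast_nonneg (α := ℝ) α
        linarith
    _ ≤ 3 * k * ((2:ℝ) ^ ((α : ℝ) / k)) := by
        apply mul_le_mul_of_nonneg_left h3 (by positivity)
    _ ≤ 3 * k * p ^ ((α : ℝ) / k) := by
        apply mul_le_mul_of_nonneg_left h2 (by positivity)

lemma pow_succ_le_aux2 (k α : ℕ) (hk : 1 ≤ k) {p : ℝ} (hp : (2:ℝ)^k ≤ p) (hp2 : 2 ≤ p) :
    (α + 1 : ℝ) ≤ p ^ ((α : ℝ) / k) := by
  have hk0 : (0:ℝ) < k := by exact_mod_cast hk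
  have h1 : ((2:ℝ)^(k:ℕ)) ^ ((α : ℝ) / k) ≤ p ^ ((α : ℝ) / k) :=
    Real.rpow_le_rpow (by positivity) hp (by positivity)
  have h2 : ((2:ℝ)^(k:ℕ)) ^ ((α : ℝ) / k) = (2:ℝ)^(α:ℕ) := by
    rw [← Real.rpow_natCast 2 k, ← Real.rpow_mul (by norm_num), ← Real.rpow_natCast 2 α]
    congr 1
    field_simp
  have h3 : (α + 1 : ℝ) ≤ (2:ℝ)^(α:ℕ) := by
    have := Nat.lt_two_pow_self (n := α)
    have : (α:ℝ) + 1 ≤ ((2^α : ℕ) : ℝ) := by exact_mod_cast this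
    simpa using this
  linarith [h1, h2 ▸ h3]

lemma divisor_bound (k : ℕ) (hk : 1 ≤ k) :
    ∀ n : ℕ, n ≠ 0 → ((n.divisors.card : ℝ)) ≤ (3*k)^(2^k) * (n:ℝ) ^ ((1:ℝ)/k) := by
  intro n hn
  have hd := Nat.card_divisors hn
  have hfact : n.factorization.prod (· ^ ·) = n := Nat.factorization_prod_pow_eq_self hn
  set pf := n.primeFactors with hpf
  -- pointwise bound
  have key : ∀ p ∈ pf, ((n.factorization p + 1 : ℕ) : ℝ) ≤
      (if p < 2^k then (3*k:ℝ) else 1) * (p:ℝ) ^ ((n.factorization p : ℝ)/k) := by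
    intro p hp
    have hpprime : p.Prime := Nat.prime_of_mem_primeFactors hp
    have hp2 : (2:ℝ) ≤ p := by exact_mod_cast hpprime.two_le
    by_cases hps : p < 2^k
    · rw [if_pos hps]
      push_cast
      exact pow_succ_le_aux k _ hk hp2
    · rw [if_neg hps, one_mul]
      push_cast
      exact pow_succ_le_aux2 k _ hk (by exact_mod_cast not_lt.mp hps) hp2
  calc ((n.divisors.card : ℝ))
      = ∏ p ∈ pf, ((n.factorization p + 1 : ℕ) : ℝ) := by rw [hd]; push_cast; ring
    _ ≤ ∏ p ∈ pf, (if p < 2^k then (3*k:ℝ) else 1) * (p:ℝ) ^ ((n.factorization p : ℝ)/k) := by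
        apply Finset.prod_le_prod (fun p _ => by positivity) key
    _ = (∏ p ∈ pf, (if p < 2^k then (3*k:ℝ) else 1)) *
        ∏ p ∈ pf, (p:ℝ) ^ ((n.factorization p : ℝ)/k) := Finset.prod_mul_distrib
    _ ≤ (3*k)^(2^k) * (n:ℝ) ^ ((1:ℝ)/k) := by
        apply mul_le_mul
        · -- bound the ite product
          have h1 : (∏ p ∈ pf, (if p < 2^k then (3*k:ℝ) else 1))
              ≤ ∏ p ∈ pf.filter (· < 2^k), (3*k:ℝ) := by
            rw [Finset.prod_ite]
            simp only [Finset.prod_const_one, mul_one]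
            simp [Finset.prod_const]
          have h2 : (pf.filter (· < 2^k)).card ≤ 2^k := by
            have : pf.filter (· < 2^k) ⊆ Finset.range (2^k) := by
              intro p hp
              simp only [Finset.mem_filter] at hp
              exact Finset.mem_range.mpr hp.2
            simpa using Finset.card_le_card this
          calc (∏ p ∈ pf, (if p < 2^k then (3*k:ℝ) else 1))
              ≤ (3*k:ℝ)^((pf.filter (· < 2^k)).card) := by
                simpa [Finset.prod_const] using h1
            _ ≤ (3*k:ℝ)^(2^k) := by
                have hk1 : (1:ℝ) ≤ k := by exact_mod_cast hk
                apply pow_le_pow_right₀ (by linarith) h2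
        · -- product of p^{α/k} = n^{1/k}
          have : ∏ p ∈ pf, (p:ℝ) ^ ((n.factorization p : ℝ)/k)
              = ∏ p ∈ pf, (((p ^ (n.factorization p) : ℕ)):ℝ) ^ ((1:ℝ)/k) := by
            apply Finset.prod_congr rfl
            intro p hp
            have hp0 : (0:ℝ) < p := by
              exact_mod_cast (Nat.prime_of_mem_primeFactors hp).pos
            push_cast
            rw [← Real.rpow_natCast (p:ℝ) (n.factorization p), ← Real.rpow_mul hp0.le]
            congr 1
            ring
          rw [this, Real.finset_prod_rpow _ _ (fun p _ => by positivity) _]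
          apply le_of_eq
          have h4 : (∏ p ∈ pf, ((p ^ n.factorization p : ℕ):ℝ)) = (n:ℝ) := by
            rw [← Nat.cast_prod]
            exact_mod_cast (by simpa [Finsupp.prod, Nat.support_factorization, hpf] using hfact : ∏ p ∈ pf, p ^ n.factorization p = n)
          rw [h4]
        · positivity
        · positivity

def M (m q : ℤ) : ℤ := -9*(q - (m^3 - 2*m^2 + 8*m) + 4*m^2) + 96*m - 64

lemma keyid (n1 n2 n3 : ℤ) :
    (3*(n1+n2)-4)*(3*(n2+n3)-4)*(3*(n1+n3)-4)
      = M (n1+n2+n3) (P n1 + P n2 + P n3) := by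
  simp only [M, P]; ring

lemma factor_ne (a : ℤ) : 3*a - 4 ≠ 0 := by omega

lemma Mne (m q n1 n2 n3 : ℤ) (h1 : n1+n2+n3 = m) (h2 : P n1 + P n2 + P n3 = q) :
    M m q ≠ 0 := by
  rw [← h1, ← h2, ← keyid]
  exact mul_ne_zero (mul_ne_zero (factor_ne _) (factor_ne _)) (factor_ne _)

lemma fiber_card (N : ℕ) (T : Finset (ℤ×ℤ×ℤ))
    (hT : ∀ p ∈ T, |p.1| ≤ (N:ℤ) ∧ |p.2.1| ≤ (N:ℤ) ∧ |p.2.2| ≤ (N:ℤ)) (m q : ℤ)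
    (k : ℕ) (hk : 1 ≤ k) :
    ((T.filter (fun p => (mm p, qq p) = (m, q))).card : ℝ)
      ≤ (2 * ((3*k)^(2^k) * ((1000*N^3+1000:ℕ):ℝ) ^ ((1:ℝ)/k)))^2 := by
  have hpred : ∀ p : ℤ×ℤ×ℤ, ((mm p, qq p) = (m, q)) ↔
      (p.1+p.2.1+p.2.2 = m ∧ P p.1+P p.2.1+P p.2.2 = q) := by
    intro p
    rw [Prod.ext_iff]
    constructor <;> (intro h; exact ⟨h.1, h.2⟩)
  rw [show T.filter (fun p => (mm p, qq p) = (m, q))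
      = T.filter (fun p => p.1+p.2.1+p.2.2 = m ∧ P p.1+P p.2.1+P p.2.2 = q) from
    Finset.filter_congr (fun p _ => by rw [hpred p])]
  set F := T.filter (fun p => p.1+p.2.1+p.2.2 = m ∧ P p.1+P p.2.1+P p.2.2 = q) with hF
  rcases Finset.eq_empty_or_nonempty F with h | ⟨p₀, hp₀⟩
  · rw [h]; simp; positivity
  have hp₀' := Finset.mem_filter.mp hp₀
  have hMne : M m q ≠ 0 := Mne m q p₀.1 p₀.2.1 p₀.2.2 hp₀'.2.1 hp₀'.2.2
  set n0 := (M m q).natAbs with hn0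
  have hn0ne : n0 ≠ 0 := Int.natAbs_ne_zero.mpr hMne
  -- bound on |M|
  have hMle : (n0 : ℤ) ≤ 1000*(N:ℤ)^3+1000 := by
    have h1 := (hT p₀ hp₀'.1).1
    have h2 := (hT p₀ hp₀'.1).2.1
    have h3 := (hT p₀ hp₀'.1).2.2
    have hid : M m q = (3*(p₀.1+p₀.2.1)-4)*(3*(p₀.2.1+p₀.2.2)-4)*(3*(p₀.1+p₀.2.2)-4) := by
      rw [keyid, hp₀'.2.1, hp₀'.2.2]
    have hN0 : (0:ℤ) ≤ N := Int.natCast_nonneg N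
    have b1 : |3*(p₀.1+p₀.2.1)-4| ≤ 6*(N:ℤ)+4 := by
      rw [abs_le] at h1 h2 ⊢; omega
    have b2 : |3*(p₀.2.1+p₀.2.2)-4| ≤ 6*(N:ℤ)+4 := by
      rw [abs_le] at h2 h3 ⊢; omega
    have b3 : |3*(p₀.1+p₀.2.2)-4| ≤ 6*(N:ℤ)+4 := by
      rw [abs_le] at h1 h3 ⊢; omega
    have : (n0 : ℤ) = |M m q| := Int.abs_eq_natAbs (M m q) ▸ rfl
    rw [this, hid, abs_mul, abs_mul]
    calc |3*(p₀.1+p₀.2.1)-4| * |3*(p₀.2.1+p₀.2.2)-4| * |3*(p₀.1+p₀.2.2)-4|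
        ≤ (6*(N:ℤ)+4) * (6*(N:ℤ)+4) * (6*(N:ℤ)+4) := by
          have a1 := abs_nonneg (3*(p₀.1+p₀.2.1)-4)
          have a2 := abs_nonneg (3*(p₀.2.1+p₀.2.2)-4)
          have a3 := abs_nonneg (3*(p₀.1+p₀.2.2)-4)
          apply mul_le_mul (mul_le_mul b1 b2 a2 (by linarith)) b3 a3 (by positivity)
      _ ≤ 1000*(N:ℤ)^3+1000 := by nlinarith [hN0, sq_nonneg ((N:ℤ)-1)]
  -- the divisor target set
  set D : Finset ℤ := n0.divisors.image (fun d : ℕ => (d:ℤ)) ∪ n0.divisors.image (fun d : ℕ => -(d:ℤ)) with hD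
  have hmemD : ∀ x : ℤ, x ∣ M m q → x ∈ D := by
    intro x hx
    have h1 : x.natAbs ∈ n0.divisors :=
      Nat.mem_divisors.mpr ⟨Int.natAbs_dvd_natAbs.mpr hx, hn0ne⟩
    rcases Int.natAbs_eq x with h | h
    · exact Finset.mem_union_left _ (Finset.mem_image.mpr ⟨x.natAbs, h1, h.symm⟩)
    · exact Finset.mem_union_right _ (Finset.mem_image.mpr ⟨x.natAbs, h1, h.symm⟩)
  have hcardD : D.card ≤ 2 * n0.divisors.card := by
    calc D.card ≤ (n0.divisors.image (fun d : ℕ => (d:ℤ))).card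
          + (n0.divisors.image (fun d : ℕ => -(d:ℤ))).card := Finset.card_union_le _ _
      _ ≤ n0.divisors.card + n0.divisors.card :=
          Nat.add_le_add (Finset.card_image_le) (Finset.card_image_le)
      _ = 2 * n0.divisors.card := by ring
  -- injection from F to D ×ˢ D
  have hinj : F.card ≤ (D ×ˢ D).card := by
    apply Finset.card_le_card_of_injOn
      (fun p => (3*(p.1+p.2.1)-4, 3*(p.2.1+p.2.2)-4))
    · intro p hp
      have hp' := Finset.mem_filter.mp hp
      have hid : (3*(p.1+p.2.1)-4)*((3*(p.2.1+p.2.2)-4)*(3*(p.1+p.2.2)-4)) = M m q := by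
        rw [← hp'.2.1, ← hp'.2.2, ← keyid]; ring
      have hid2 : (3*(p.2.1+p.2.2)-4)*((3*(p.1+p.2.1)-4)*(3*(p.1+p.2.2)-4)) = M m q := by
        rw [← hp'.2.1, ← hp'.2.2, ← keyid]; ring
      exact Finset.mem_product.mpr ⟨hmemD _ ⟨_, hid.symm⟩, hmemD _ ⟨_, hid2.symm⟩⟩
    · intro p hp p' hp' heq
      have h1 := (Finset.mem_filter.mp hp).2.1
      have h2 := (Finset.mem_filter.mp hp').2.1
      have e1 : 3*(p.1+p.2.1)-4 = 3*(p'.1+p'.2.1)-4 := congrArg Prod.fst heq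
      have e2 : 3*(p.2.1+p.2.2)-4 = 3*(p'.2.1+p'.2.2)-4 := congrArg Prod.snd heq
      have : p.1 = p'.1 ∧ p.2.1 = p'.2.1 ∧ p.2.2 = p'.2.2 := by omega
      exact Prod.ext this.1 (Prod.ext this.2.1 this.2.2)
  -- assemble
  have hnat : F.card ≤ (2 * n0.divisors.card)^2 := by
    calc F.card ≤ (D ×ˢ D).card := hinj
      _ = D.card * D.card := Finset.card_product D D
      _ ≤ (2 * n0.divisors.card) * (2 * n0.divisors.card) :=
          Nat.mul_le_mul hcardD hcardD
      _ = (2 * n0.divisors.card)^2 := (sq _).symm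
  have hdb := divisor_bound k hk n0 hn0ne
  have hmono : ((n0:ℕ):ℝ) ^ ((1:ℝ)/k) ≤ ((1000*N^3+1000:ℕ):ℝ) ^ ((1:ℝ)/k) := by
    apply Real.rpow_le_rpow (by positivity) _ (by positivity)
    exact_mod_cast hMle
  have hge : (0:ℝ) ≤ (n0.divisors.card : ℝ) := by positivity
  have hle2 : (n0.divisors.card : ℝ) ≤ (3*k)^(2^k) * ((1000*N^3+1000:ℕ):ℝ) ^ ((1:ℝ)/k) := by
    calc (n0.divisors.card : ℝ) ≤ (3*k)^(2^k) * ((n0:ℕ):ℝ) ^ ((1:ℝ)/k) := hdb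
      _ ≤ (3*k)^(2^k) * ((1000*N^3+1000:ℕ):ℝ) ^ ((1:ℝ)/k) := by
          apply mul_le_mul_of_nonneg_left hmono (by positivity)
  calc (F.card : ℝ) ≤ ((2 * n0.divisors.card : ℕ) : ℝ)^2 := by exact_mod_cast hnat
    _ ≤ (2 * ((3*k)^(2^k) * ((1000*N^3+1000:ℕ):ℝ) ^ ((1:ℝ)/k)))^2 := by
        apply pow_le_pow_left₀ (by positivity)
        push_cast at hle2 ⊢
        linarith


lemma sumAA (a : ℤ →₀ ℂ) :
    (∑ p ∈ a.support ×ˢ a.support ×ˢ a.support, ‖AA a p‖^2)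
      = (∑ n ∈ a.support, ‖a n‖^2) * ((∑ n ∈ a.support, ‖a n‖^2) * (∑ n ∈ a.support, ‖a n‖^2)) := by
  rw [Finset.sum_mul_sum, Finset.sum_mul_sum, Finset.sum_product]
  apply Finset.sum_congr rfl
  intro n1 _
  rw [Finset.sum_product]
  apply Finset.sum_congr rfl
  intro n2 _
  rw [Finset.mul_sum]
  apply Finset.sum_congr rfl
  intro n3 _
  simp [AA, norm_mul]
  ring

theorem stmt4 :
    ∀ ε : ℝ, 0 < ε → ∃ C : ℝ, 0 < C ∧
      ∀ (N : ℕ), 1 ≤ N → ∀ a : ℤ →₀ ℂ, (∀ n ∈ a.support, |n| ≤ (N : ℤ)) →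
        LpNorm 6 (sol a) ≤ C * (N : ℝ) ^ ε * (∑ n ∈ a.support, ‖a n‖ ^ 2) ^ ((1:ℝ) / 2) := by
  intro ε hε
  set kk : ℕ := max 1 ⌈(1:ℝ)/ε⌉₊ with hkk
  have hk1 : 1 ≤ kk := le_max_left _ _
  have hk0 : (0:ℝ) < kk := by exact_mod_cast hk1
  have hke : (1:ℝ)/kk ≤ ε := by
    rw [div_le_iff₀ hk0]
    have h1 : (1:ℝ)/ε ≤ ⌈(1:ℝ)/ε⌉₊ := Nat.le_ceil _
    have h2 : ((⌈(1:ℝ)/ε⌉₊ : ℕ):ℝ) ≤ kk := by exact_mod_cast le_max_right 1 ⌈(1:ℝ)/ε⌉₊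
    rw [div_le_iff₀ hε] at h1
    nlinarith
  set C₁ : ℝ := (2 * ((3*(kk:ℝ))^(2^kk) * 2000))^2 with hC₁
  have hkkpos : (0:ℝ) < 3*(kk:ℝ) := by positivity
  have hC₁pos : 0 < C₁ := by positivity
  refine ⟨((2*Real.pi)^2)^((1:ℝ)/6) * C₁^((1:ℝ)/6), by positivity, ?_⟩
  intro N hN a hsupp
  set S := a.support with hS
  set T := S ×ˢ S ×ˢ S with hT
  set B := ∑ n ∈ S, ‖a n‖^2 with hB
  have hBnn : 0 ≤ B := Finset.sum_nonneg (fun n _ => by positivity)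
  have hTmem : ∀ p ∈ T, |p.1| ≤ (N:ℤ) ∧ |p.2.1| ≤ (N:ℤ) ∧ |p.2.2| ≤ (N:ℤ) := by
    intro p hp
    rw [hT, Finset.mem_product] at hp
    obtain ⟨h1, hp2⟩ := hp
    rw [Finset.mem_product] at hp2
    exact ⟨hsupp _ h1, hsupp _ hp2.1, hsupp _ hp2.2⟩
  -- fiber bound constant
  set CbN : ℝ := (2 * ((3*(kk:ℝ))^(2^kk) * ((1000*N^3+1000:ℕ):ℝ) ^ ((1:ℝ)/kk)))^2 with hCbN
  -- the sum over fibers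
  set K : (ℤ×ℤ×ℤ) → ℤ×ℤ := fun p => (mm p, qq p) with hK
  set c : ℤ×ℤ → ℂ := fun k => ∑ p ∈ T.filter (fun p => K p = k), AA a p with hc
  have hfib : ∀ k ∈ T.image K, ‖c k‖^2 ≤ CbN * ∑ p ∈ T.filter (fun p => K p = k), ‖AA a p‖^2 := by
    intro k _
    have h1 : ‖c k‖ ≤ ∑ p ∈ T.filter (fun p => K p = k), ‖AA a p‖ := norm_sum_le _ _
    have h2 : (∑ p ∈ T.filter (fun p => K p = k), ‖AA a p‖)^2
        ≤ ((T.filter (fun p => K p = k)).card : ℝ) * ∑ p ∈ T.filter (fun p => K p = k), ‖AA a p‖^2 := by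
      have h0 := Finset.sum_mul_sq_le_sq_mul_sq (T.filter (fun p => K p = k))
        (fun _ => (1:ℝ)) (fun p => ‖AA a p‖)
      simp only [one_mul, one_pow, Finset.sum_const, nsmul_eq_mul, mul_one] at h0
      exact h0
    have h3 : ((T.filter (fun p => K p = k)).card : ℝ) ≤ CbN := by
      have hthis := fiber_card N T hTmem k.1 k.2 kk hk1
      have hfe : T.filter (fun p => (mm p, qq p) = (k.1, k.2)) = T.filter (fun p => K p = k) :=
        Finset.filter_congr (fun p _ => by rw [hK])
      rw [hfe] at hthis
      exact hthis
    calc ‖c k‖^2 ≤ (∑ p ∈ T.filter (fun p => K p = k), ‖AA a p‖)^2 := by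
          apply pow_le_pow_left₀ (norm_nonneg _) h1
      _ ≤ ((T.filter (fun p => K p = k)).card : ℝ) * ∑ p ∈ T.filter (fun p => K p = k), ‖AA a p‖^2 := h2
      _ ≤ CbN * ∑ p ∈ T.filter (fun p => K p = k), ‖AA a p‖^2 := by
          apply mul_le_mul_of_nonneg_right h3
          exact Finset.sum_nonneg (fun p _ => by positivity)
  have hsum : ∑ k ∈ T.image K, ‖c k‖^2 ≤ CbN * B^3 := by
    calc ∑ k ∈ T.image K, ‖c k‖^2
        ≤ ∑ k ∈ T.image K, CbN * ∑ p ∈ T.filter (fun p => K p = k), ‖AA a p‖^2 :=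
          Finset.sum_le_sum hfib
      _ = CbN * ∑ k ∈ T.image K, ∑ p ∈ T.filter (fun p => K p = k), ‖AA a p‖^2 := by
          rw [Finset.mul_sum]
      _ = CbN * ∑ p ∈ T, ‖AA a p‖^2 := by
          rw [Finset.sum_fiberwise_of_maps_to (fun p hp => Finset.mem_image_of_mem K hp)]
      _ = CbN * B^3 := by rw [hT, hS, sumAA]; ring
  -- integral value
  have hint : (∫ x in (0:ℝ)..(2*Real.pi), ∫ t in (0:ℝ)..(2*Real.pi), (‖sol a x t‖^(6:ℕ) : ℝ))
      = (2*Real.pi)^2 * ∑ k ∈ T.image K, ‖c k‖^2 := by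
    rw [int_eq, sum_eq_fibers]
  have hintle : (∫ x in (0:ℝ)..(2*Real.pi), ∫ t in (0:ℝ)..(2*Real.pi), (‖sol a x t‖^(6:ℕ) : ℝ))
      ≤ (2*Real.pi)^2 * (CbN * B^3) := by
    rw [hint]
    apply mul_le_mul_of_nonneg_left hsum (by positivity)
  have hintnn : 0 ≤ (∫ x in (0:ℝ)..(2*Real.pi), ∫ t in (0:ℝ)..(2*Real.pi), (‖sol a x t‖^(6:ℕ) : ℝ)) := by
    rw [hint]
    have : 0 ≤ ∑ k ∈ T.image K, ‖c k‖^2 := Finset.sum_nonneg (fun k _ => by positivity)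
    positivity
  -- LpNorm
  have hLp : LpNorm 6 (sol a)
      = (∫ x in (0:ℝ)..(2*Real.pi), ∫ t in (0:ℝ)..(2*Real.pi), (‖sol a x t‖^(6:ℕ) : ℝ)) ^ ((1:ℝ)/6) := by
    rw [LpNorm]
    congr 1
    apply intervalIntegral.integral_congr
    intro x _
    apply intervalIntegral.integral_congr
    intro t _
    simp only [show (6:ℝ) = ((6:ℕ):ℝ) from by norm_num, Real.rpow_natCast]
  rw [hLp]
  -- bound CbN
  have hCb : CbN ≤ C₁ * ((N:ℝ) ^ ((6:ℝ)/kk)) := by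
    have hNpos : (0:ℝ) < N := by exact_mod_cast hN
    have hm : ((1000*N^3+1000:ℕ):ℝ) ≤ 2000 * (N:ℝ)^3 := by
      push_cast
      have : (1:ℝ) ≤ (N:ℝ)^3 := one_le_pow₀ (by exact_mod_cast hN)
      nlinarith
    have h1 : ((1000*N^3+1000:ℕ):ℝ) ^ ((1:ℝ)/kk) ≤ (2000 * (N:ℝ)^3) ^ ((1:ℝ)/kk) :=
      Real.rpow_le_rpow (by positivity) hm (by positivity)
    have h2 : (2000 * (N:ℝ)^3) ^ ((1:ℝ)/kk) = 2000 ^ ((1:ℝ)/kk) * ((N:ℝ)^3) ^ ((1:ℝ)/kk) :=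
      Real.mul_rpow (by norm_num) (by positivity)
    have h3 : (2000:ℝ) ^ ((1:ℝ)/kk) ≤ 2000 := by
      calc (2000:ℝ) ^ ((1:ℝ)/kk) ≤ 2000 ^ (1:ℝ) :=
            Real.rpow_le_rpow_of_exponent_le (by norm_num)
              (by rw [div_le_one hk0]; exact_mod_cast hk1)
        _ = 2000 := Real.rpow_one _
    have h4 : ((N:ℝ)^3) ^ ((1:ℝ)/kk) = (N:ℝ) ^ ((3:ℝ)/kk) := by
      rw [← Real.rpow_natCast (N:ℝ) 3, ← Real.rpow_mul hNpos.le]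
      congr 1
      push_cast
      ring
    have h5 : ((1000*N^3+1000:ℕ):ℝ) ^ ((1:ℝ)/kk) ≤ 2000 * (N:ℝ) ^ ((3:ℝ)/kk) := by
      calc ((1000*N^3+1000:ℕ):ℝ) ^ ((1:ℝ)/kk) ≤ 2000 ^ ((1:ℝ)/kk) * ((N:ℝ)^3) ^ ((1:ℝ)/kk) := by
            rw [← h2]; exact h1
        _ ≤ 2000 * (N:ℝ) ^ ((3:ℝ)/kk) := by
            rw [h4]
            apply mul_le_mul_of_nonneg_right h3 (by positivity)
    have h6 : ((N:ℝ) ^ ((3:ℝ)/kk))^(2:ℕ) = (N:ℝ) ^ ((6:ℝ)/kk) := by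
      rw [← Real.rpow_natCast ((N:ℝ) ^ ((3:ℝ)/kk)) 2, ← Real.rpow_mul hNpos.le]
      congr 1
      push_cast
      ring
    calc CbN ≤ (2 * ((3*(kk:ℝ))^(2^kk) * (2000 * (N:ℝ) ^ ((3:ℝ)/kk))))^2 := by
          rw [hCbN]
          apply pow_le_pow_left₀ (by positivity)
          apply mul_le_mul_of_nonneg_left _ (by norm_num)
          exact mul_le_mul_of_nonneg_left h5 (by positivity)
      _ = C₁ * ((N:ℝ) ^ ((3:ℝ)/kk))^(2:ℕ) := by rw [hC₁]; ring
      _ = C₁ * ((N:ℝ) ^ ((6:ℝ)/kk)) := by rw [h6]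
  -- final chain
  have hNpos : (0:ℝ) < N := by exact_mod_cast hN
  have hN1 : (1:ℝ) ≤ N := by exact_mod_cast hN
  have hNe : (N:ℝ) ^ ((1:ℝ)/kk) ≤ (N:ℝ) ^ ε :=
    Real.rpow_le_rpow_of_exponent_le hN1 hke
  have step : (∫ x in (0:ℝ)..(2*Real.pi), ∫ t in (0:ℝ)..(2*Real.pi), (‖sol a x t‖^(6:ℕ) : ℝ)) ^ ((1:ℝ)/6)
      ≤ ((2*Real.pi)^2 * (C₁ * ((N:ℝ) ^ ((6:ℝ)/kk)) * B^3)) ^ ((1:ℝ)/6) := by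
    apply Real.rpow_le_rpow hintnn _ (by norm_num)
    calc (∫ x in (0:ℝ)..(2*Real.pi), ∫ t in (0:ℝ)..(2*Real.pi), (‖sol a x t‖^(6:ℕ) : ℝ))
        ≤ (2*Real.pi)^2 * (CbN * B^3) := hintle
      _ ≤ (2*Real.pi)^2 * (C₁ * ((N:ℝ) ^ ((6:ℝ)/kk)) * B^3) := by
          apply mul_le_mul_of_nonneg_left _ (by positivity)
          apply mul_le_mul_of_nonneg_right hCb (by positivity)
  refine le_trans step ?_
  have hsplit : ((2*Real.pi)^2 * (C₁ * ((N:ℝ) ^ ((6:ℝ)/kk)) * B^3)) ^ ((1:ℝ)/6)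
      = ((2*Real.pi)^2) ^ ((1:ℝ)/6) * C₁ ^ ((1:ℝ)/6) * ((N:ℝ) ^ ((6:ℝ)/kk)) ^ ((1:ℝ)/6)
        * (B^3) ^ ((1:ℝ)/6) := by
    rw [Real.mul_rpow (by positivity) (by positivity),
      Real.mul_rpow (by positivity) (by positivity),
      Real.mul_rpow (by positivity) (by positivity)]
    ring
  rw [hsplit]
  have hNx : ((N:ℝ) ^ ((6:ℝ)/kk)) ^ ((1:ℝ)/6) = (N:ℝ) ^ ((1:ℝ)/kk) := by
    rw [← Real.rpow_mul hNpos.le]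
    congr 1
    field_simp
  have hBx : (B^3) ^ ((1:ℝ)/6) = B ^ ((1:ℝ)/2) := by
    rw [← Real.rpow_natCast B 3, ← Real.rpow_mul hBnn]
    congr 1
    push_cast
    ring
  rw [hNx, hBx]
  calc ((2*Real.pi)^2) ^ ((1:ℝ)/6) * C₁ ^ ((1:ℝ)/6) * (N:ℝ) ^ ((1:ℝ)/kk) * B ^ ((1:ℝ)/2)
      ≤ ((2*Real.pi)^2) ^ ((1:ℝ)/6) * C₁ ^ ((1:ℝ)/6) * (N:ℝ) ^ ε * B ^ ((1:ℝ)/2) := by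
        apply mul_le_mul_of_nonneg_right _ (by positivity)
        exact mul_le_mul_of_nonneg_left hNe (by positivity)
    _ = ((2*Real.pi)^2) ^ ((1:ℝ)/6) * C₁ ^ ((1:ℝ)/6) * (N:ℝ) ^ ε * B ^ ((1:ℝ)/2) := rfl
end
end

section
/- For every integer m ≥ 3 and every ε > 0 there exists a constant C_{ε,m} > 0 such that for every natural number N ≥ 1 and all integers n, j, the number of (m−1)-tuples (n₁, …, n_{m−1}) ∈ ℤ^{m−1} with |n_i| ≤ N for each i and satisfying P(n₁) + P(n₂) + ⋯ + P(n_{m−1}) + P(n − n₁ − n₂ − ⋯ − n_{m−1}) = j is at most C_{ε,m} N^{m−3+ε}. -/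
open scoped BigOperators

/-- `rcountm m N n j` is the number of `(m-1)`-tuples `(n₁, …, n_{m−1}) ∈ ℤ^{m−1}` with
`|nᵢ| ≤ N` for each `i` satisfying `P n₁ + ⋯ + P n_{m−1} + P (n − n₁ − ⋯ − n_{m−1}) = j`. -/
noncomputable def rcountm (m N : ℕ) (n j : ℤ) : ℕ :=
  ((Fintype.piFinset (fun _ : Fin (m - 1) => Finset.Icc (-(N : ℤ)) (N : ℤ))).filter
    (fun v => (∑ i, P (v i)) + P (n - ∑ i, v i) = j)).card

noncomputable def pairSet (N : ℕ) (K L : ℤ) : Finset (ℤ × ℤ) :=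
  ((Finset.Icc (-(N : ℤ)) N) ×ˢ (Finset.Icc (-(N : ℤ)) N)).filter
    (fun q => P q.1 + P q.2 + P (K - q.1 - q.2) = L)

def MM (K L : ℤ) : ℤ := 9 * P K - 4 * (3 * K - 4) ^ 2 - 9 * L

lemma key_ident {a b K L : ℤ} (h : P a + P b + P (K - a - b) = L) :
    (3 * a + 4 - 3 * K) * ((3 * b + 4 - 3 * K) * (3 * (a + b) - 4)) = MM K L := by
  simp only [P, MM] at *
  linear_combination (-9 : ℤ) * h

lemma MM_ne (K L : ℤ) : MM K L ≠ 0 := by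
  have h : MM K L = 3 * (3 * P K - 12 * K ^ 2 + 32 * K - 3 * L - 22) + 2 := by
    simp only [MM, P]; ring
  omega

lemma fiber_eq {a b a' b' K L : ℤ} (h : P a + P b + P (K - a - b) = L)
    (h' : P a' + P b' + P (K - a' - b') = L) (hs : a + b = a' + b') :
    (a', b') = (a, b) ∨ (a', b') = (b, a) := by
  have hb' : b' = a + b - a' := by omega
  subst hb'
  have h2 : (4 - 3 * (a + b)) * ((a' - a) * (a' - b)) = 0 := by
    simp only [P] at h h'
    linear_combination h - h'
  have h3 : (4 - 3 * (a + b)) ≠ 0 := by omega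
  rcases mul_eq_zero.mp h2 with h4 | h4
  · exact absurd h4 h3
  rcases mul_eq_zero.mp h4 with h5 | h5
  · left
    have ha : a' = a := by omega
    rw [Prod.mk.injEq]
    omega
  · right
    have ha : a' = b := by omega
    rw [Prod.mk.injEq]
    omega

lemma abs_x_bounds {a K : ℤ} {N : ℕ} (ha1 : -(N : ℤ) ≤ a) (ha2 : a ≤ N) :
    3 * |K| - 3 * N - 4 ≤ |3 * a + 4 - 3 * K| ∧ |3 * a + 4 - 3 * K| ≤ 3 * N + 4 + 3 * |K| := by
  rcases abs_cases (3 * a + 4 - 3 * K) with ⟨h1, h2⟩ | ⟨h1, h2⟩ <;>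
    rcases abs_cases K with ⟨h3, h4⟩ | ⟨h3, h4⟩ <;>
      constructor <;> linarith

lemma arith_contra {N Kab X Y Z X' Y' Z' : ℤ} (hN1 : 1 ≤ N)
    (hK : 200 * N ^ 3 < Kab)
    (hXl : 3 * Kab - 3 * N - 4 ≤ X) (hXu : X ≤ 3 * N + 4 + 3 * Kab)
    (hYl : 3 * Kab - 3 * N - 4 ≤ Y) (hYu : Y ≤ 3 * N + 4 + 3 * Kab)
    (hXl' : 3 * Kab - 3 * N - 4 ≤ X') (hYl' : 3 * Kab - 3 * N - 4 ≤ Y')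
    (hZ : 0 ≤ Z) (hZb : Z ≤ 6 * N + 4) (hZ' : 0 ≤ Z') (hlt : Z + 1 ≤ Z')
    (heq : X * (Y * Z) = X' * (Y' * Z')) : False := by
  have hN3 : (1:ℤ) ≤ N ^ 3 := one_le_pow₀ hN1
  have hNN : N ≤ N ^ 3 := le_self_pow₀ hN1 (by omega)
  set A : ℤ := 3 * Kab - 3 * N - 4 with hAdef
  set B : ℤ := 3 * N + 4 + 3 * Kab with hBdef
  have hA0 : 0 ≤ A := by rw [hAdef]; linarith
  have hB0 : 0 ≤ B := by rw [hBdef]; linarith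
  have hlow : A * (A * (Z + 1)) ≤ X' * (Y' * Z') := by
    have h1 : A * (Z + 1) ≤ Y' * Z' := mul_le_mul hYl' hlt (by linarith) (by linarith)
    exact mul_le_mul hXl' h1 (mul_nonneg hA0 (by linarith)) (by linarith)
  have hup : X * (Y * Z) ≤ B * (B * Z) := by
    have h1 : Y * Z ≤ B * Z := mul_le_mul_of_nonneg_right hYu hZ
    calc X * (Y * Z) ≤ B * (Y * Z) :=
          mul_le_mul_of_nonneg_right hXu (mul_nonneg (by linarith) hZ)
      _ ≤ B * (B * Z) := mul_le_mul_of_nonneg_left h1 hB0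
  have hfinal : A * (A * (Z + 1)) ≤ B * (B * Z) := by
    calc A * (A * (Z + 1)) ≤ X' * (Y' * Z') := hlow
      _ = X * (Y * Z) := heq.symm
      _ ≤ B * (B * Z) := hup
  have hBA : 0 ≤ B * B - A * A := by nlinarith
  have h2 : A * A ≤ (B * B - A * A) * Z := by nlinarith [hfinal]
  have h3 : (B * B - A * A) * Z ≤ (B * B - A * A) * (6 * N + 4) :=
    mul_le_mul_of_nonneg_left hZb hBA
  have h4 : B * B - A * A = 6 * Kab * (6 * N + 8) := by rw [hAdef, hBdef]; ring
  have h68 : (6 * N + 8) * (6 * N + 4) ≤ 140 * N ^ 3 := by nlinarith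
  have hKpos : (0:ℤ) < Kab := by linarith
  have hA2 : A * A ≤ 840 * Kab * N ^ 3 := by
    calc A * A ≤ (B * B - A * A) * (6 * N + 4) := le_trans h2 h3
      _ = 6 * Kab * ((6 * N + 8) * (6 * N + 4)) := by rw [h4]; ring
      _ ≤ 6 * Kab * (140 * N ^ 3) := mul_le_mul_of_nonneg_left h68 (by linarith)
      _ = 840 * Kab * N ^ 3 := by ring
  have h6 : (0:ℤ) ≤ 3 * Kab - 7 * N ^ 3 := by linarith
  have h5 : 3 * Kab - 7 * N ^ 3 ≤ A := by rw [hAdef]; linarith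
  have h7 : (3 * Kab - 7 * N ^ 3) * (3 * Kab - 7 * N ^ 3) ≤ A * A := mul_le_mul h5 h5 h6 hA0
  nlinarith [h7, hA2, mul_pos (by linarith : (0:ℤ) < Kab - 200 * N ^ 3) hKpos,
    sq_nonneg (N ^ 3)]

lemma no_two {N : ℕ} (hN : 1 ≤ N) {K L : ℤ} (hK : 200 * (N : ℤ) ^ 3 < |K|)
    {a b a' b' : ℤ} (ha1 : -(N:ℤ) ≤ a) (ha2 : a ≤ N) (hb1 : -(N:ℤ) ≤ b) (hb2 : b ≤ N)
    (ha1' : -(N:ℤ) ≤ a') (ha2' : a' ≤ N) (hb1' : -(N:ℤ) ≤ b') (hb2' : b' ≤ N)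
    (h : P a + P b + P (K - a - b) = L) (h' : P a' + P b' + P (K - a' - b') = L)
    (hlt : |3 * (a + b) - 4| + 1 ≤ |3 * (a' + b') - 4|) : False := by
  have hid := key_ident h
  have hid' := key_ident h'
  have habs : |3 * a + 4 - 3 * K| * (|3 * b + 4 - 3 * K| * |3 * (a + b) - 4|)
      = |3 * a' + 4 - 3 * K| * (|3 * b' + 4 - 3 * K| * |3 * (a' + b') - 4|) := by
    rw [← abs_mul, ← abs_mul, ← abs_mul, ← abs_mul, hid, hid']
  have hx := abs_x_bounds (K := K) ha1 ha2
  have hy := abs_x_bounds (K := K) hb1 hb2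
  have hx' := abs_x_bounds (K := K) ha1' ha2'
  have hy' := abs_x_bounds (K := K) hb1' hb2'
  have hzb : |3 * (a + b) - 4| ≤ 6 * (N:ℤ) + 4 := by
    rcases abs_cases (3 * (a + b) - 4) with ⟨h1, _⟩ | ⟨h1, _⟩ <;> rw [h1] <;> linarith
  exact arith_contra (by exact_mod_cast hN) hK hx.1 hx.2 hy.1 hy.2 hx'.1 hy'.1
    (abs_nonneg _) hzb (abs_nonneg _) hlt habs

lemma mem_pairSet {N : ℕ} {K L : ℤ} {q : ℤ × ℤ} :
    q ∈ pairSet N K L ↔ (-(N:ℤ) ≤ q.1 ∧ q.1 ≤ N) ∧ (-(N:ℤ) ≤ q.2 ∧ q.2 ≤ N) ∧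
      P q.1 + P q.2 + P (K - q.1 - q.2) = L := by
  simp [pairSet, Finset.mem_filter, Finset.mem_product, Finset.mem_Icc, and_assoc]

lemma fiber_card_le {N : ℕ} {K L : ℤ} (s₀ : ℤ)
    (hs₀ : s₀ ∈ (pairSet N K L).image (fun q => q.1 + q.2)) :
    ((pairSet N K L).filter (fun q => q.1 + q.2 = s₀)).card ≤ 2 := by
  obtain ⟨q, hq, rfl⟩ := Finset.mem_image.mp hs₀
  have hsub : (pairSet N K L).filter (fun q' => q'.1 + q'.2 = q.1 + q.2) ⊆
      {q, (q.2, q.1)} := by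
    intro q' hq'
    obtain ⟨hq'mem, hq's⟩ := Finset.mem_filter.mp hq'
    have h1 := (mem_pairSet.mp hq).2.2
    have h2 := (mem_pairSet.mp hq'mem).2.2
    have := fiber_eq h1 h2 hq's.symm
    have hq'eq : q' = (q'.1, q'.2) := rfl
    simp only [Finset.mem_insert, Finset.mem_singleton]
    rcases this with h | h
    · left; rw [hq'eq, h]
    · right; rw [hq'eq, h]
  calc ((pairSet N K L).filter (fun q' => q'.1 + q'.2 = q.1 + q.2)).card
      ≤ ({q, (q.2, q.1)} : Finset (ℤ × ℤ)).card := Finset.card_le_card hsub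
    _ ≤ 2 := (Finset.card_insert_le _ _).trans (by simp)

lemma image_card_le_tau {N : ℕ} (hN : 1 ≤ N) {K L : ℤ}
    (hK : |K| ≤ 200 * (N:ℤ) ^ 3) :
    ((pairSet N K L).image (fun q => q.1 + q.2)).card ≤ (MM K L).natAbs.divisors.card := by
  apply Finset.card_le_card_of_injOn (fun s => (3 * s - 4).natAbs)
  · intro s hs
    obtain ⟨q, hq, rfl⟩ := Finset.mem_image.mp hs
    obtain ⟨_, _, heq⟩ := mem_pairSet.mp hq
    have hid := key_ident heq
    rw [Finset.mem_coe, Nat.mem_divisors]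
    constructor
    · apply Int.natAbs_dvd_natAbs.mpr
      exact ⟨(3 * q.1 + 4 - 3 * K) * (3 * q.2 + 4 - 3 * K), by linear_combination (-1 : ℤ) * hid⟩
    · simpa using MM_ne K L
  · intro s _ s' _ hss
    have := Int.natAbs_eq_natAbs_iff.mp hss
    omega

lemma MM_natAbs_le {N : ℕ} (hN : 1 ≤ N) {K L : ℤ} (hK : |K| ≤ 200 * (N:ℤ) ^ 3)
    (hne : (pairSet N K L).Nonempty) : (MM K L).natAbs ≤ 4000000 * N ^ 7 := by
  obtain ⟨q, hq⟩ := hne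
  obtain ⟨⟨ha1, ha2⟩, ⟨hb1, hb2⟩, heq⟩ := mem_pairSet.mp hq
  have hid := key_ident heq
  have hN1 : (1:ℤ) ≤ (N:ℤ) := by exact_mod_cast hN
  have hN3 : (1:ℤ) ≤ (N:ℤ) ^ 3 := one_le_pow₀ hN1
  have hNN : (N:ℤ) ≤ (N:ℤ) ^ 3 := le_self_pow₀ hN1 (by omega)
  have hx := abs_x_bounds (K := K) ha1 ha2
  have hy := abs_x_bounds (K := K) hb1 hb2
  have hxb : |3 * q.1 + 4 - 3 * K| ≤ 607 * (N:ℤ) ^ 3 := by linarith [hx.2]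
  have hyb : |3 * q.2 + 4 - 3 * K| ≤ 607 * (N:ℤ) ^ 3 := by linarith [hy.2]
  have hzb : |3 * (q.1 + q.2) - 4| ≤ 10 * (N:ℤ) := by
    rcases abs_cases (3 * (q.1 + q.2) - 4) with ⟨h1, _⟩ | ⟨h1, _⟩ <;> rw [h1] <;> linarith
  have habs : |MM K L| ≤ 4000000 * (N:ℤ) ^ 7 := by
    rw [← hid, abs_mul, abs_mul]
    have h1 : |3 * q.2 + 4 - 3 * K| * |3 * (q.1 + q.2) - 4| ≤
        (607 * (N:ℤ) ^ 3) * (10 * N) :=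
      mul_le_mul hyb hzb (abs_nonneg _) (by positivity)
    have h2 : |3 * q.1 + 4 - 3 * K| * (|3 * q.2 + 4 - 3 * K| * |3 * (q.1 + q.2) - 4|) ≤
        (607 * (N:ℤ) ^ 3) * ((607 * (N:ℤ) ^ 3) * (10 * N)) :=
      mul_le_mul hxb h1 (mul_nonneg (abs_nonneg _) (abs_nonneg _)) (by positivity)
    nlinarith [h2, pow_nonneg (by linarith : (0:ℤ) ≤ (N:ℤ)) 7]
  have : ((MM K L).natAbs : ℤ) ≤ ((4000000 * N ^ 7 : ℕ) : ℤ) := by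
    push_cast
    exact habs
  exact_mod_cast this

lemma image_card_le_one {N : ℕ} (hN : 1 ≤ N) {K L : ℤ}
    (hK : 200 * (N:ℤ) ^ 3 < |K|) :
    ((pairSet N K L).image (fun q => q.1 + q.2)).card ≤ 1 := by
  apply Finset.card_le_one.mpr
  intro s hs s' hs'
  obtain ⟨q, hq, rfl⟩ := Finset.mem_image.mp hs
  obtain ⟨q', hq', rfl⟩ := Finset.mem_image.mp hs'
  obtain ⟨⟨ha1, ha2⟩, ⟨hb1, hb2⟩, heq⟩ := mem_pairSet.mp hq
  obtain ⟨⟨ha1', ha2'⟩, ⟨hb1', hb2'⟩, heq'⟩ := mem_pairSet.mp hq'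
  rcases lt_trichotomy |3 * (q.1 + q.2) - 4| |3 * (q'.1 + q'.2) - 4| with h | h | h
  · exact absurd (no_two hN hK ha1 ha2 hb1 hb2 ha1' ha2' hb1' hb2' heq heq' (by omega)) id
  · have := abs_eq_abs.mp h
    omega
  · exact absurd (no_two hN hK ha1' ha2' hb1' hb2' ha1 ha2 hb1 hb2 heq' heq (by omega)) id

lemma expo_bound (k e : ℕ) (hk : 1 ≤ k) : (e + 1) ^ k ≤ (2 * k) ^ k * 2 ^ e := by
  have h1 : e + 1 ≤ 2 * k * 2 ^ (e / k) := by
    have hd := Nat.div_add_mod e k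
    have hm : e % k < k := Nat.mod_lt _ hk
    have h2 : e / k < 2 ^ (e / k) := Nat.lt_two_pow_self
    nlinarith [Nat.one_le_two_pow (n := e / k)]
  calc (e + 1) ^ k ≤ (2 * k * 2 ^ (e / k)) ^ k := Nat.pow_le_pow_left h1 k
    _ = (2 * k) ^ k * (2 ^ (e / k)) ^ k := mul_pow _ _ _
    _ = (2 * k) ^ k * 2 ^ (e / k * k) := by rw [← pow_mul]
    _ ≤ (2 * k) ^ k * 2 ^ e := by
        have : e / k * k ≤ e := Nat.div_mul_le_self e k
        exact Nat.mul_le_mul_left _ (Nat.pow_le_pow_right (by norm_num) this)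

lemma primepow_bound (k p e : ℕ) (hk : 1 ≤ k) (hp : 2 ≤ p) :
    (e + 1) ^ k ≤ (if p < 2 ^ k then (2 * k) ^ k else 1) * p ^ e := by
  split_ifs with h
  · calc (e + 1) ^ k ≤ (2 * k) ^ k * 2 ^ e := expo_bound k e hk
      _ ≤ (2 * k) ^ k * p ^ e := Nat.mul_le_mul_left _ (Nat.pow_le_pow_left hp e)
  · push_neg at h
    calc (e + 1) ^ k ≤ (2 ^ e) ^ k := Nat.pow_le_pow_left (Nat.lt_two_pow_self (n := e)) k
      _ = (2 ^ k) ^ e := by rw [← pow_mul, ← pow_mul, Nat.mul_comm]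
      _ ≤ p ^ e := Nat.pow_le_pow_left h e
      _ = 1 * p ^ e := (one_mul _).symm

lemma tau_pow_le (k : ℕ) (hk : 1 ≤ k) (M : ℕ) (hM : 1 ≤ M) :
    M.divisors.card ^ k ≤ ((2 * k) ^ k) ^ 2 ^ k * M := by
  have hM0 : M ≠ 0 := by omega
  rw [Nat.card_divisors hM0]
  rw [← Finset.prod_pow]
  have step1 : ∀ p ∈ M.primeFactors,
      (M.factorization p + 1) ^ k ≤
        (if p < 2 ^ k then (2 * k) ^ k else 1) * p ^ M.factorization p := by
    intro p hp
    exact primepow_bound k p _ hk (Nat.Prime.two_le (Nat.prime_of_mem_primeFactors hp))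
  calc (∏ p ∈ M.primeFactors, (M.factorization p + 1) ^ k)
      ≤ ∏ p ∈ M.primeFactors,
          (if p < 2 ^ k then (2 * k) ^ k else 1) * p ^ M.factorization p :=
        Finset.prod_le_prod' step1
    _ = (∏ p ∈ M.primeFactors, (if p < 2 ^ k then (2 * k) ^ k else 1)) *
          ∏ p ∈ M.primeFactors, p ^ M.factorization p := Finset.prod_mul_distrib
    _ ≤ ((2 * k) ^ k) ^ 2 ^ k * M := by
        have hprod : (∏ p ∈ M.primeFactors, p ^ M.factorization p) = M := by
          rw [← Nat.support_factorization]
          exact Nat.factorization_prod_pow_eq_self hM0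
        rw [hprod]
        apply Nat.mul_le_mul_right
        rw [Finset.prod_ite, Finset.prod_const, Finset.prod_const, one_pow, mul_one]
        have hcard : (M.primeFactors.filter (· < 2 ^ k)).card ≤ 2 ^ k := by
          have hsub : M.primeFactors.filter (· < 2 ^ k) ⊆ Finset.range (2 ^ k) := by
            intro p hp
            simp only [Finset.mem_filter] at hp
            exact Finset.mem_range.mpr hp.2
          simpa using Finset.card_le_card hsub
        exact Nat.pow_le_pow_right (Nat.one_le_two_pow.trans (Nat.pow_le_pow_left (by omega) k)) hcard

lemma pair_card (k N : ℕ) (hk : 1 ≤ k) (hN : 1 ≤ N) (K L : ℤ) :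
    (pairSet N K L).card ^ k ≤ 2 ^ k * ((2 * k) ^ k) ^ 2 ^ k * 4000000 * N ^ 7 := by
  have hCk : 1 ≤ ((2 * k) ^ k) ^ 2 ^ k := Nat.one_le_pow _ _ (Nat.pow_pos (by omega))
  rcases Finset.eq_empty_or_nonempty (pairSet N K L) with he | hne
  · rw [he]
    rw [Finset.card_empty, Nat.zero_pow (by omega : 0 < k)]
    exact Nat.zero_le _
  have hcard : (pairSet N K L).card ≤
      2 * ((pairSet N K L).image (fun q => q.1 + q.2)).card :=
    Finset.card_le_mul_card_image _ 2 fiber_card_le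
  rcases le_or_gt |K| (200 * (N:ℤ) ^ 3) with hK | hK
  · -- small K
    have h1 : ((pairSet N K L).image (fun q => q.1 + q.2)).card ≤
        (MM K L).natAbs.divisors.card := image_card_le_tau hN hK
    have hMpos : 1 ≤ (MM K L).natAbs := by
      have := MM_ne K L
      omega
    have h2 := tau_pow_le k hk (MM K L).natAbs hMpos
    have h3 := MM_natAbs_le hN hK hne
    calc (pairSet N K L).card ^ k
        ≤ (2 * (MM K L).natAbs.divisors.card) ^ k :=
          Nat.pow_le_pow_left (hcard.trans (Nat.mul_le_mul_left 2 h1)) k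
      _ = 2 ^ k * (MM K L).natAbs.divisors.card ^ k := mul_pow _ _ _
      _ ≤ 2 ^ k * (((2 * k) ^ k) ^ 2 ^ k * (MM K L).natAbs) := Nat.mul_le_mul_left _ h2
      _ ≤ 2 ^ k * (((2 * k) ^ k) ^ 2 ^ k * (4000000 * N ^ 7)) :=
          Nat.mul_le_mul_left _ (Nat.mul_le_mul_left _ h3)
      _ = 2 ^ k * ((2 * k) ^ k) ^ 2 ^ k * 4000000 * N ^ 7 := by ring
  · -- large K
    have h1 : (pairSet N K L).card ≤ 2 :=
      hcard.trans (by simpa using Nat.mul_le_mul_left 2 (image_card_le_one hN hK))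
    calc (pairSet N K L).card ^ k ≤ 2 ^ k := Nat.pow_le_pow_left h1 k
      _ ≤ 2 ^ k * ((2 * k) ^ k) ^ 2 ^ k * 4000000 * N ^ 7 := by
          have hN7 : 1 ≤ N ^ 7 := Nat.one_le_pow _ _ (by omega)
          calc 2 ^ k = 2 ^ k * 1 * 1 * 1 := by ring
            _ ≤ 2 ^ k * ((2 * k) ^ k) ^ 2 ^ k * 4000000 * N ^ 7 :=
              Nat.mul_le_mul (Nat.mul_le_mul (Nat.mul_le_mul_left _ hCk) (by norm_num)) hN7

noncomputable def rc (r N : ℕ) (n j : ℤ) : ℕ :=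
  ((Fintype.piFinset (fun _ : Fin r => Finset.Icc (-(N : ℤ)) (N : ℤ))).filter
    (fun v => (∑ i, P (v i)) + P (n - ∑ i, v i) = j)).card

lemma rc_two (N : ℕ) (n j : ℤ) : rc 2 N n j = (pairSet N n j).card := by
  apply Finset.card_nbij' (fun v => (v 0, v 1)) (fun q => ![q.1, q.2])
  · intro v hv
    obtain ⟨hmem, hcond⟩ := Finset.mem_filter.mp hv
    have h0 := Fintype.mem_piFinset.mp hmem 0
    have h1 := Fintype.mem_piFinset.mp hmem 1
    rw [Finset.mem_Icc] at h0 h1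
    rw [Fin.sum_univ_two, Fin.sum_univ_two] at hcond
    apply mem_pairSet.mpr
    refine ⟨⟨h0.1, h0.2⟩, ⟨h1.1, h1.2⟩, ?_⟩
    rw [show n - v 0 - v 1 = n - (v 0 + v 1) by ring]
    exact hcond
  · intro q hq
    obtain ⟨⟨ha1, ha2⟩, ⟨hb1, hb2⟩, heq⟩ := mem_pairSet.mp hq
    apply Finset.mem_filter.mpr
    constructor
    · apply Fintype.mem_piFinset.mpr
      intro i
      fin_cases i <;> simp [Finset.mem_Icc] <;> omega
    · rw [Fin.sum_univ_two, Fin.sum_univ_two]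
      show P q.1 + P q.2 + P (n - (q.1 + q.2)) = j
      rw [show n - (q.1 + q.2) = n - q.1 - q.2 by ring]
      exact heq
  · intro v _
    funext i
    fin_cases i <;> rfl
  · intro q _
    rfl

lemma rc_step (r N : ℕ) (n j : ℤ) :
    rc (r + 1) N n j ≤ ∑ t ∈ Finset.Icc (-(N : ℤ)) N, rc r N (n - t) (j - P t) := by
  classical
  set s := ((Fintype.piFinset (fun _ : Fin (r+1) => Finset.Icc (-(N : ℤ)) (N : ℤ))).filter
    (fun v => (∑ i, P (v i)) + P (n - ∑ i, v i) = j)) with hsdef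
  have hmapsto : ∀ v ∈ s, v (Fin.last r) ∈ Finset.Icc (-(N : ℤ)) (N : ℤ) := by
    intro v hv
    exact Fintype.mem_piFinset.mp (Finset.mem_filter.mp hv).1 (Fin.last r)
  rw [show rc (r+1) N n j = s.card from rfl,
    Finset.card_eq_sum_card_fiberwise hmapsto]
  apply Finset.sum_le_sum
  intro t _
  apply Finset.card_le_card_of_injOn Fin.init
  · intro v hv
    obtain ⟨hv1, hv2⟩ := Finset.mem_filter.mp hv
    obtain ⟨hmem, hcond⟩ := Finset.mem_filter.mp hv1
    apply Finset.mem_filter.mpr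
    constructor
    · apply Fintype.mem_piFinset.mpr
      intro i
      exact Fintype.mem_piFinset.mp hmem i.castSucc
    · have hsum1 : ∑ i : Fin (r+1), P (v i) =
          (∑ i : Fin r, P (Fin.init v i)) + P (v (Fin.last r)) := by
        rw [Fin.sum_univ_castSucc]; rfl
      have hsum2 : ∑ i : Fin (r+1), v i =
          (∑ i : Fin r, Fin.init v i) + v (Fin.last r) := by
        rw [Fin.sum_univ_castSucc]; rfl
      rw [hsum1, hsum2, hv2] at hcond
      rw [show n - t - ∑ i : Fin r, Fin.init v i
          = n - ((∑ i : Fin r, Fin.init v i) + t) by ring]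
      omega
  · intro v hv w hw hinit
    have hv2 := (Finset.mem_filter.mp hv).2
    have hw2 := (Finset.mem_filter.mp hw).2
    have := Fin.snoc_init_self v
    rw [← Fin.snoc_init_self v, ← Fin.snoc_init_self w, hinit, hv2, hw2]

lemma rc_bound_real (k : ℕ) (hk : 1 ≤ k) (p N : ℕ) (hN : 1 ≤ N) :
    ∀ n j : ℤ, (rc (p + 2) N n j : ℝ) ≤
      (3 * (N : ℝ)) ^ p * ((2 ^ k * ((2 * k) ^ k) ^ 2 ^ k * 4000000 : ℕ) : ℝ) *
        (N : ℝ) ^ ((7 : ℝ) / k) := by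
  set D : ℕ := 2 ^ k * ((2 * k) ^ k) ^ 2 ^ k * 4000000 with hDdef
  have hD1 : (1 : ℕ) ≤ D := by
    apply Nat.one_le_iff_ne_zero.mpr
    positivity
  have hN0 : (0:ℝ) < N := by exact_mod_cast Nat.lt_of_lt_of_le Nat.zero_lt_one hN
  have hNpow : (0:ℝ) ≤ (N:ℝ) ^ ((7:ℝ)/k) := Real.rpow_nonneg (le_of_lt hN0) _
  induction p with
  | zero =>
    intro n j
    simp only [pow_zero, one_mul]
    have hnat := pair_card k N hk hN n j
    have hreal : ((rc 2 N n j : ℝ)) ^ k ≤ (D : ℝ) * (N : ℝ) ^ (7 : ℕ) := by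
      rw [rc_two]
      calc ((pairSet N n j).card : ℝ) ^ k = (((pairSet N n j).card ^ k : ℕ) : ℝ) := by
            push_cast; ring
        _ ≤ ((D * N ^ 7 : ℕ) : ℝ) := by
            exact_mod_cast Nat.cast_le.mpr (by rw [hDdef]; exact hnat)
        _ = (D : ℝ) * (N : ℝ) ^ (7 : ℕ) := by push_cast; ring
    have hRk : ((D : ℝ) * (N : ℝ) ^ ((7:ℝ)/k)) ^ k = (D:ℝ)^k * (N:ℝ) ^ (7:ℕ) := by
      rw [mul_pow, ← Real.rpow_natCast ((N:ℝ) ^ ((7:ℝ)/k)) k, ← Real.rpow_mul (le_of_lt hN0)]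
      congr 1
      rw [div_mul_cancel₀]
      · rw [← Real.rpow_natCast (N:ℝ) 7]; norm_num
      · exact Nat.cast_ne_zero.mpr (by omega)
    apply le_of_pow_le_pow_left₀ (by omega : k ≠ 0) (by positivity)
    calc ((rc 2 N n j : ℝ)) ^ k ≤ (D : ℝ) * (N : ℝ) ^ (7 : ℕ) := hreal
      _ ≤ (D:ℝ)^k * (N:ℝ) ^ (7:ℕ) := by
          apply mul_le_mul_of_nonneg_right _ (by positivity)
          exact le_self_pow₀ (by exact_mod_cast hD1) (by omega)
      _ = ((D : ℝ) * (N : ℝ) ^ ((7:ℝ)/k)) ^ k := hRk.symm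
  | succ p ih =>
    intro n j
    have hstep := rc_step (p + 2) N n j
    have hcast : (rc (p + 2 + 1) N n j : ℝ) ≤
        ∑ t ∈ Finset.Icc (-(N : ℤ)) N, (rc (p + 2) N (n - t) (j - P t) : ℝ) := by
      exact_mod_cast Nat.cast_le.mpr hstep
    have hsum : ∑ t ∈ Finset.Icc (-(N : ℤ)) N, (rc (p + 2) N (n - t) (j - P t) : ℝ) ≤
        ∑ _t ∈ Finset.Icc (-(N : ℤ)) N,
          (3 * (N : ℝ)) ^ p * (D : ℝ) * (N : ℝ) ^ ((7 : ℝ) / k) :=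
      Finset.sum_le_sum (fun t _ => ih (n - t) (j - P t))
    have hcardIcc : ((Finset.Icc (-(N : ℤ)) N).card : ℝ) ≤ 3 * (N : ℝ) := by
      rw [Int.card_Icc]
      have : ((N : ℤ) + 1 - -(N:ℤ)).toNat = 2 * N + 1 := by omega
      rw [this]
      have h1N : (1:ℝ) ≤ (N:ℝ) := by exact_mod_cast hN
      push_cast
      linarith
    calc (rc (p + 1 + 2) N n j : ℝ) = (rc (p + 2 + 1) N n j : ℝ) := by norm_num
      _ ≤ _ := hcast
      _ ≤ _ := hsum
      _ = ((Finset.Icc (-(N : ℤ)) N).card : ℝ) *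
            ((3 * (N : ℝ)) ^ p * (D : ℝ) * (N : ℝ) ^ ((7 : ℝ) / k)) := by
          rw [Finset.sum_const, nsmul_eq_mul]
      _ ≤ (3 * (N : ℝ)) * ((3 * (N : ℝ)) ^ p * (D : ℝ) * (N : ℝ) ^ ((7 : ℝ) / k)) := by
          apply mul_le_mul_of_nonneg_right hcardIcc
          positivity
      _ = (3 * (N : ℝ)) ^ (p + 1) * (D : ℝ) * (N : ℝ) ^ ((7 : ℝ) / k) := by ring

theorem stmt6 :
    ∀ m : ℕ, 3 ≤ m → ∀ ε : ℝ, 0 < ε → ∃ C : ℝ, 0 < C ∧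
      ∀ (N : ℕ), 1 ≤ N → ∀ (n j : ℤ),
        (rcountm m N n j : ℝ) ≤ C * (N : ℝ) ^ ((m : ℝ) - 3 + ε) := by
  intro m hm ε hε
  set k : ℕ := ⌈(7:ℝ)/ε⌉₊ + 1 with hkdef
  have hk1 : 1 ≤ k := by omega
  set D : ℕ := 2 ^ k * ((2 * k) ^ k) ^ 2 ^ k * 4000000 with hDdef
  have hDpos : (0:ℝ) < D := by
    have : 0 < D := by rw [hDdef]; positivity
    exact_mod_cast this
  refine ⟨(3:ℝ) ^ m * D, by positivity, ?_⟩
  intro N hN n j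
  have hN1R : (1:ℝ) ≤ (N:ℝ) := by exact_mod_cast hN
  have hN0 : (0:ℝ) < (N:ℝ) := by linarith
  have h7k : (7:ℝ)/k ≤ ε := by
    have hceil : (7:ℝ)/ε ≤ (⌈(7:ℝ)/ε⌉₊ : ℝ) := Nat.le_ceil _
    have hkR : (7:ℝ)/ε ≤ (k:ℝ) := by rw [hkdef]; push_cast; linarith
    have hk0 : (0:ℝ) < (k:ℝ) := by
      have : 0 < k := hk1
      exact_mod_cast this
    rw [div_le_iff₀ hk0]
    have := (div_le_iff₀ hε).mp hkR
    linarith [this]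
  have hrc : rcountm m N n j = rc ((m - 3) + 2) N n j := by
    have h1 : m - 1 = (m - 3) + 2 := by omega
    show rc (m - 1) N n j = _
    rw [h1]
  rw [hrc]
  have hbound := rc_bound_real k hk1 (m - 3) N hN n j
  rw [← hDdef] at hbound
  have hcast : ((m - 3 : ℕ) : ℝ) = (m : ℝ) - 3 := by
    push_cast [Nat.cast_sub hm]
    ring
  calc (rc ((m - 3) + 2) N n j : ℝ)
      ≤ (3 * (N:ℝ)) ^ (m - 3) * (D:ℝ) * (N:ℝ) ^ ((7:ℝ)/k) := hbound
    _ = (3:ℝ) ^ (m - 3) * (D:ℝ) * ((N:ℝ) ^ (m - 3 : ℕ) * (N:ℝ) ^ ((7:ℝ)/k)) := by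
        rw [mul_pow]; ring
    _ ≤ (3:ℝ) ^ m * (D:ℝ) * ((N:ℝ) ^ ((m:ℝ) - 3 + ε)) := by
        apply mul_le_mul
        · apply mul_le_mul_of_nonneg_right _ (le_of_lt hDpos)
          exact pow_le_pow_right₀ (by norm_num) (by omega)
        · rw [← Real.rpow_natCast (N:ℝ) (m - 3), ← Real.rpow_add hN0, hcast]
          apply Real.rpow_le_rpow_of_exponent_le hN1R
          linarith
        · positivity
        · positivity
    _ = (3:ℝ) ^ m * (D:ℝ) * (N:ℝ) ^ ((m:ℝ) - 3 + ε) := rfl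
end

section
/- For every integer m ≥ 3 and every ε > 0 there exists a constant C_{ε,m} > 0 such that for every natural number N ≥ 1 and every sequence a : ℤ → ℂ supported in {n : |n| ≤ N}, the function u(x,t) = Σ_{|n|≤N} a(n) e^{i(nx + P(n)t)} satisfies ‖u‖_{L^{2m}(T²)} ≤ C_{ε,m} N^{(m−3)/(2m) + ε} (Σ_{|n|≤N} |a(n)|²)^{1/2}. -/
open scoped BigOperators

set_option maxHeartbeats 1000000

noncomputable section

namespace Stmt7Aux

open Complex intervalIntegral

/-- The basic character `e^{i(sx+μt)}`. -/
def ee (s μ : ℤ) (x t : ℝ) : ℂ :=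
  Complex.exp (Complex.I * (((s : ℝ) * x + (μ : ℝ) * t : ℝ) : ℂ))

lemma sol_eq (a : ℤ →₀ ℂ) (x t : ℝ) :
    sol a x t = ∑ n ∈ a.support, a n * ee n (P n) x t := rfl

lemma ee_mul (s μ s' μ' : ℤ) (x t : ℝ) :
    ee s μ x t * ee s' μ' x t = ee (s + s') (μ + μ') x t := by
  rw [ee, ee, ee, ← Complex.exp_add]
  congr 1
  push_cast
  ring

lemma conj_ee (s μ : ℤ) (x t : ℝ) :
    (starRingEnd ℂ) (ee s μ x t) = ee (-s) (-μ) x t := by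
  rw [ee, ee, ← Complex.exp_conj, map_mul, Complex.conj_I, Complex.conj_ofReal]
  congr 1
  push_cast
  ring

lemma norm_ee (s μ : ℤ) (x t : ℝ) : ‖ee s μ x t‖ = 1 := by
  rw [ee, Complex.norm_exp]
  simp [Complex.mul_re]

lemma ee_split (s μ : ℤ) (x t : ℝ) :
    ee s μ x t = Complex.exp (Complex.I * (((s : ℝ) * x : ℝ) : ℂ)) *
      Complex.exp (Complex.I * (((μ : ℝ) * t : ℝ) : ℂ)) := by
  rw [ee, ← Complex.exp_add]
  congr 1
  push_cast
  ring

lemma cont_ee (s μ : ℤ) : Continuous fun p : ℝ × ℝ => ee s μ p.1 p.2 := by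
  unfold ee
  fun_prop

lemma cont_ee_t (s μ : ℤ) (x : ℝ) : Continuous fun t : ℝ => ee s μ x t := by
  unfold ee
  fun_prop

lemma integral_exp_I (k : ℤ) :
    (∫ x in (0:ℝ)..(2 * Real.pi), Complex.exp (Complex.I * (((k : ℝ) * x : ℝ) : ℂ)))
      = if k = 0 then ((2 * Real.pi : ℝ) : ℂ) else 0 := by
  rcases eq_or_ne k 0 with hk | hk
  · subst hk
    have hz : (fun x : ℝ => Complex.exp (Complex.I * ((((0:ℤ):ℝ) * x : ℝ) : ℂ)))
        = fun _ => (1:ℂ) := by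
      funext x
      simp
    rw [hz, intervalIntegral.integral_const, if_pos rfl, sub_zero, Complex.real_smul, mul_one]
  · have hc : (Complex.I * (k : ℂ)) ≠ 0 :=
      mul_ne_zero Complex.I_ne_zero (by exact_mod_cast hk)
    have hrw : ∀ x : ℝ, Complex.I * (((k : ℝ) * x : ℝ) : ℂ) = (Complex.I * (k : ℂ)) * (x : ℂ) := by
      intro x; push_cast; ring
    simp only [hrw]
    rw [integral_exp_mul_complex hc]
    have h1 : Complex.I * (k : ℂ) * ((2 * Real.pi : ℝ) : ℂ)
        = (k : ℂ) * (2 * (Real.pi : ℂ) * Complex.I) := by push_cast; ring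
    have h0 : Complex.I * (k : ℂ) * ((0 : ℝ) : ℂ) = 0 := by push_cast; ring
    rw [h1, h0, Complex.exp_int_mul_two_pi_mul_I, Complex.exp_zero, sub_self, zero_div, if_neg hk]

lemma int_ee (s μ : ℤ) :
    (∫ x in (0:ℝ)..(2 * Real.pi), ∫ t in (0:ℝ)..(2 * Real.pi), ee s μ x t)
      = if s = 0 ∧ μ = 0 then (((2 * Real.pi) ^ 2 : ℝ) : ℂ) else 0 := by
  have h1 : ∀ x : ℝ, (∫ t in (0:ℝ)..(2 * Real.pi), ee s μ x t)
      = Complex.exp (Complex.I * (((s : ℝ) * x : ℝ) : ℂ)) *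
          (if μ = 0 then ((2 * Real.pi : ℝ) : ℂ) else 0) := by
    intro x
    simp only [ee_split]
    rw [intervalIntegral.integral_const_mul, integral_exp_I]
  simp only [h1]
  rw [intervalIntegral.integral_mul_const, integral_exp_I]
  rcases eq_or_ne s 0 with hs | hs <;> rcases eq_or_ne μ 0 with hμ | hμ <;>
    simp [hs, hμ] <;> push_cast <;> ring

lemma int2_const_mul_ee (c : ℂ) (s μ : ℤ) :
    (∫ x in (0:ℝ)..(2 * Real.pi), ∫ t in (0:ℝ)..(2 * Real.pi), c * ee s μ x t)
      = c * (if s = 0 ∧ μ = 0 then (((2 * Real.pi) ^ 2 : ℝ) : ℂ) else 0) := by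
  simp only [intervalIntegral.integral_const_mul]
  rw [int_ee]

lemma integral2_finset_sum {ι : Type*} (s : Finset ι) (f : ι → ℝ → ℝ → ℂ)
    (hf : ∀ i ∈ s, Continuous fun p : ℝ × ℝ => f i p.1 p.2) :
    (∫ x in (0:ℝ)..(2 * Real.pi), ∫ t in (0:ℝ)..(2 * Real.pi), ∑ i ∈ s, f i x t)
      = ∑ i ∈ s, ∫ x in (0:ℝ)..(2 * Real.pi), ∫ t in (0:ℝ)..(2 * Real.pi), f i x t := by
  have h1 : ∀ x : ℝ, (∫ t in (0:ℝ)..(2 * Real.pi), ∑ i ∈ s, f i x t)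
      = ∑ i ∈ s, ∫ t in (0:ℝ)..(2 * Real.pi), f i x t := by
    intro x
    exact integral_finset_sum fun i hi =>
      (((hf i hi).comp (Continuous.prodMk_right x)).intervalIntegrable _ _)
  simp only [h1]
  refine integral_finset_sum fun i hi => ?_
  have : Continuous fun x => ∫ t in (0:ℝ)..(2 * Real.pi), f i x t := by
    apply intervalIntegral.continuous_parametric_intervalIntegral_of_continuous
    · exact hf i hi
    · exact continuous_const
  exact this.intervalIntegrable _ _

/-- sums of frequencies. -/
def Sm (p : ℤ × ℤ × ℤ) : ℤ := p.1 + p.2.1 + p.2.2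

def Qm (p : ℤ × ℤ × ℤ) : ℤ := P p.1 + P p.2.1 + P p.2.2

def cf (a : ℤ →₀ ℂ) (p : ℤ × ℤ × ℤ) : ℂ := a p.1 * a p.2.1 * a p.2.2

def M3 (a : ℤ →₀ ℂ) : Finset (ℤ × ℤ × ℤ) := a.support ×ˢ a.support ×ˢ a.support

lemma cube (a : ℤ →₀ ℂ) (x t : ℝ) :
    (sol a x t) ^ 3 = ∑ p ∈ M3 a, cf a p * ee (Sm p) (Qm p) x t := by
  rw [M3, Finset.sum_product]
  simp only [Finset.sum_product]
  rw [show (3:ℕ) = 2 + 1 from rfl, pow_succ, sq, sol_eq, Finset.sum_mul_sum]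
  simp only [Finset.sum_mul, Finset.mul_sum]
  refine Finset.sum_congr rfl fun n _ => Finset.sum_congr rfl fun m _ =>
    Finset.sum_congr rfl fun k _ => ?_
  simp only [Sm, Qm, cf]
  conv_rhs => rw [← ee_mul, ← ee_mul]
  ring

def Zc (a : ℤ →₀ ℂ) : ℂ :=
  ∑ p ∈ M3 a, ∑ q ∈ M3 a, (cf a p * (starRingEnd ℂ) (cf a q)) *
    (if Sm p = Sm q ∧ Qm p = Qm q then (((2 * Real.pi) ^ 2 : ℝ) : ℂ) else 0)

lemma int_eq_Zc (a : ℤ →₀ ℂ) :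
    (∫ x in (0:ℝ)..(2 * Real.pi), ∫ t in (0:ℝ)..(2 * Real.pi),
        (sol a x t) ^ 3 * (starRingEnd ℂ) ((sol a x t) ^ 3)) = Zc a := by
  have hpt : ∀ x t : ℝ, (sol a x t) ^ 3 * (starRingEnd ℂ) ((sol a x t) ^ 3)
      = ∑ p ∈ M3 a, ∑ q ∈ M3 a, (cf a p * (starRingEnd ℂ) (cf a q)) *
          ee (Sm p - Sm q) (Qm p - Qm q) x t := by
    intro x t
    rw [cube, map_sum, Finset.sum_mul_sum]
    refine Finset.sum_congr rfl fun p _ => Finset.sum_congr rfl fun q _ => ?_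
    rw [map_mul, conj_ee, sub_eq_add_neg (Sm p), sub_eq_add_neg (Qm p), ← ee_mul]
    ring
  have hcont : ∀ p ∈ M3 a, ∀ q ∈ M3 a,
      Continuous fun y : ℝ × ℝ => (cf a p * (starRingEnd ℂ) (cf a q)) *
        ee (Sm p - Sm q) (Qm p - Qm q) y.1 y.2 := fun p _ q _ =>
    continuous_const.mul (cont_ee _ _)
  calc (∫ x in (0:ℝ)..(2 * Real.pi), ∫ t in (0:ℝ)..(2 * Real.pi),
        (sol a x t) ^ 3 * (starRingEnd ℂ) ((sol a x t) ^ 3))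
      = ∫ x in (0:ℝ)..(2 * Real.pi), ∫ t in (0:ℝ)..(2 * Real.pi),
          ∑ p ∈ M3 a, ∑ q ∈ M3 a, (cf a p * (starRingEnd ℂ) (cf a q)) *
            ee (Sm p - Sm q) (Qm p - Qm q) x t := by
        simp only [hpt]
    _ = ∑ p ∈ M3 a, ∫ x in (0:ℝ)..(2 * Real.pi), ∫ t in (0:ℝ)..(2 * Real.pi),
          ∑ q ∈ M3 a, (cf a p * (starRingEnd ℂ) (cf a q)) *
            ee (Sm p - Sm q) (Qm p - Qm q) x t := by
        refine integral2_finset_sum _ _ fun p hp => ?_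
        exact continuous_finset_sum _ fun q hq => hcont p hp q hq
    _ = ∑ p ∈ M3 a, ∑ q ∈ M3 a, ∫ x in (0:ℝ)..(2 * Real.pi), ∫ t in (0:ℝ)..(2 * Real.pi),
          (cf a p * (starRingEnd ℂ) (cf a q)) * ee (Sm p - Sm q) (Qm p - Qm q) x t := by
        refine Finset.sum_congr rfl fun p hp => ?_
        exact integral2_finset_sum _ _ fun q hq => hcont p hp q hq
    _ = Zc a := by
        refine Finset.sum_congr rfl fun p hp => Finset.sum_congr rfl fun q hq => ?_
        rw [int2_const_mul_ee]
        congr 1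
        simp only [sub_eq_zero]

lemma triple_pow (F : Finset ℤ) (f : ℤ → ℝ) :
    (∑ n ∈ F, f n) ^ 3 = ∑ n ∈ F, ∑ m ∈ F, ∑ k ∈ F, f n * f m * f k := by
  rw [show (3:ℕ) = 2 + 1 from rfl, pow_succ, sq, Finset.sum_mul_sum]
  simp only [Finset.sum_mul, Finset.mul_sum]
  refine Finset.sum_congr rfl fun n _ => Finset.sum_congr rfl fun m _ =>
    Finset.sum_congr rfl fun k _ => by ring

lemma sum_cf_sq (a : ℤ →₀ ℂ) :
    ∑ p ∈ M3 a, ‖cf a p‖ ^ 2 = (∑ n ∈ a.support, ‖a n‖ ^ 2) ^ 3 := by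
  rw [triple_pow, M3, Finset.sum_product]
  simp only [Finset.sum_product]
  refine Finset.sum_congr rfl fun n _ => Finset.sum_congr rfl fun m _ =>
    Finset.sum_congr rfl fun k _ => ?_
  simp only [cf, norm_mul, mul_pow]

lemma Zc_bound (a : ℤ →₀ ℂ) (R : ℝ)
    (hR : ∀ p ∈ M3 a,
      (((M3 a).filter fun q => Sm p = Sm q ∧ Qm p = Qm q).card : ℝ) ≤ R) :
    ‖Zc a‖ ≤ (2 * Real.pi) ^ 2 * R * (∑ n ∈ a.support, ‖a n‖ ^ 2) ^ 3 := by
  classical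
  have hterm : ∀ p q : ℤ × ℤ × ℤ,
      ‖(cf a p * (starRingEnd ℂ) (cf a q)) *
        (if Sm p = Sm q ∧ Qm p = Qm q then (((2 * Real.pi) ^ 2 : ℝ) : ℂ) else 0)‖
      ≤ (2 * Real.pi) ^ 2 *
          (if Sm p = Sm q ∧ Qm p = Qm q then ‖cf a p‖ * ‖cf a q‖ else 0) := by
    intro p q
    rw [norm_mul, norm_mul, RingHomIsometric.norm_map]
    split_ifs with h
    · have hnr : ‖(((2 * Real.pi) ^ 2 : ℝ) : ℂ)‖ = (2 * Real.pi) ^ 2 := by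
        rw [Complex.norm_real, Real.norm_eq_abs, _root_.abs_of_nonneg (by positivity)]
      rw [hnr]
      exact le_of_eq (by ring)
    · simp
  have h1 : ‖Zc a‖ ≤ ∑ p ∈ M3 a, ∑ q ∈ M3 a, (2 * Real.pi) ^ 2 *
      (if Sm p = Sm q ∧ Qm p = Qm q then ‖cf a p‖ * ‖cf a q‖ else 0) :=
    (norm_sum_le _ _).trans (Finset.sum_le_sum fun p _ =>
      (norm_sum_le _ _).trans (Finset.sum_le_sum fun q _ => hterm p q))
  have h2 : ∀ p q : ℤ × ℤ × ℤ,
      (if Sm p = Sm q ∧ Qm p = Qm q then ‖cf a p‖ * ‖cf a q‖ else 0)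
      ≤ (1/2) * (if Sm p = Sm q ∧ Qm p = Qm q then ‖cf a p‖ ^ 2 else 0)
        + (1/2) * (if Sm p = Sm q ∧ Qm p = Qm q then ‖cf a q‖ ^ 2 else 0) := by
    intro p q
    split_ifs with h
    · nlinarith [sq_nonneg (‖cf a p‖ - ‖cf a q‖)]
    · simp
  have hsymm : (∑ p ∈ M3 a, ∑ q ∈ M3 a,
        (if Sm p = Sm q ∧ Qm p = Qm q then ‖cf a q‖ ^ 2 else 0))
      = ∑ p ∈ M3 a, ∑ q ∈ M3 a,
        (if Sm p = Sm q ∧ Qm p = Qm q then ‖cf a p‖ ^ 2 else 0) := by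
    rw [Finset.sum_comm]
    refine Finset.sum_congr rfl fun q _ => Finset.sum_congr rfl fun p _ => ?_
    have hiff : (Sm p = Sm q ∧ Qm p = Qm q) ↔ (Sm q = Sm p ∧ Qm q = Qm p) := by
      constructor <;> rintro ⟨ha, hb⟩ <;> exact ⟨ha.symm, hb.symm⟩
    rw [if_congr hiff rfl rfl]
  have h3 : ∀ p ∈ M3 a, (∑ q ∈ M3 a,
        (if Sm p = Sm q ∧ Qm p = Qm q then ‖cf a p‖ ^ 2 else 0))
      = ‖cf a p‖ ^ 2 * (((M3 a).filter fun q => Sm p = Sm q ∧ Qm p = Qm q).card : ℝ) := by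
    intro p _
    rw [← Finset.sum_filter, Finset.sum_const, nsmul_eq_mul, mul_comm]
  have key : (∑ p ∈ M3 a, ∑ q ∈ M3 a,
        (if Sm p = Sm q ∧ Qm p = Qm q then ‖cf a p‖ * ‖cf a q‖ else 0))
      ≤ R * (∑ n ∈ a.support, ‖a n‖ ^ 2) ^ 3 := by
    calc (∑ p ∈ M3 a, ∑ q ∈ M3 a,
        (if Sm p = Sm q ∧ Qm p = Qm q then ‖cf a p‖ * ‖cf a q‖ else 0))
        ≤ ∑ p ∈ M3 a, ∑ q ∈ M3 a,
            ((1/2) * (if Sm p = Sm q ∧ Qm p = Qm q then ‖cf a p‖ ^ 2 else 0)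
              + (1/2) * (if Sm p = Sm q ∧ Qm p = Qm q then ‖cf a q‖ ^ 2 else 0)) :=
          Finset.sum_le_sum fun p _ => Finset.sum_le_sum fun q _ => h2 p q
      _ = ∑ p ∈ M3 a, ∑ q ∈ M3 a,
            (if Sm p = Sm q ∧ Qm p = Qm q then ‖cf a p‖ ^ 2 else 0) := by
          simp only [Finset.sum_add_distrib, ← Finset.mul_sum, hsymm]
          ring
      _ = ∑ p ∈ M3 a, ‖cf a p‖ ^ 2 *
            (((M3 a).filter fun q => Sm p = Sm q ∧ Qm p = Qm q).card : ℝ) :=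
          Finset.sum_congr rfl h3
      _ ≤ ∑ p ∈ M3 a, ‖cf a p‖ ^ 2 * R :=
          Finset.sum_le_sum fun p hp =>
            mul_le_mul_of_nonneg_left (hR p hp) (by positivity)
      _ = R * ∑ p ∈ M3 a, ‖cf a p‖ ^ 2 := by rw [← Finset.sum_mul]; ring
      _ = R * (∑ n ∈ a.support, ‖a n‖ ^ 2) ^ 3 := by rw [sum_cf_sq]
  calc ‖Zc a‖ ≤ ∑ p ∈ M3 a, ∑ q ∈ M3 a, (2 * Real.pi) ^ 2 *
      (if Sm p = Sm q ∧ Qm p = Qm q then ‖cf a p‖ * ‖cf a q‖ else 0) := h1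
    _ = (2 * Real.pi) ^ 2 * ∑ p ∈ M3 a, ∑ q ∈ M3 a,
        (if Sm p = Sm q ∧ Qm p = Qm q then ‖cf a p‖ * ‖cf a q‖ else 0) := by
        simp only [← Finset.mul_sum]
    _ ≤ (2 * Real.pi) ^ 2 * (R * (∑ n ∈ a.support, ‖a n‖ ^ 2) ^ 3) :=
        mul_le_mul_of_nonneg_left key (by positivity)
    _ = (2 * Real.pi) ^ 2 * R * (∑ n ∈ a.support, ‖a n‖ ^ 2) ^ 3 := by ring

lemma Pbound (N : ℤ) (hN : 1 ≤ N) (n : ℤ) (h : |n| ≤ N) : |P n| ≤ 11 * N ^ 3 := by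
  have h1 : |n| ^ 3 ≤ N ^ 3 := pow_le_pow_left₀ (abs_nonneg n) h 3
  have h2 : |n| ^ 2 ≤ N ^ 2 := pow_le_pow_left₀ (abs_nonneg n) h 2
  have hN2 : N ^ 2 ≤ N ^ 3 := by nlinarith
  have hN1 : N ≤ N ^ 3 := by nlinarith
  calc |P n| = |n ^ 3 - 2 * n ^ 2 + 8 * n| := by rw [P]
    _ ≤ |n ^ 3 - 2 * n ^ 2| + |8 * n| := abs_add_le _ _
    _ ≤ |n ^ 3| + |2 * n ^ 2| + |8 * n| := by
        have := abs_sub (n ^ 3) (2 * n ^ 2)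
        linarith
    _ = |n| ^ 3 + 2 * |n| ^ 2 + 8 * |n| := by
        rw [_root_.abs_mul, _root_.abs_mul, _root_.abs_pow, _root_.abs_pow]
        norm_num
    _ ≤ N ^ 3 + 2 * N ^ 2 + 8 * N := by linarith
    _ ≤ 11 * N ^ 3 := by linarith

/-- The counting lemma. -/
lemma count (N : ℕ) (hN : 1 ≤ N) (a : ℤ →₀ ℂ)
    (hsupp : ∀ n ∈ a.support, |n| ≤ (N : ℤ)) (p : ℤ × ℤ × ℤ) (hp : p ∈ M3 a) :
    ∃ K : ℕ, K ≠ 0 ∧ (K : ℝ) ≤ 6000 * (N : ℝ) ^ 3 ∧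
      (((M3 a).filter fun q => Sm p = Sm q ∧ Qm p = Qm q).card : ℝ)
        ≤ 4 * (K.divisors.card : ℝ) ^ 2 := by
  classical
  rw [M3, Finset.mem_product] at hp
  obtain ⟨hp1, hp23⟩ := hp
  rw [Finset.mem_product] at hp23
  obtain ⟨hp2, hp3⟩ := hp23
  set s : ℤ := Sm p with hs
  set KZ : ℤ := (3 * s - 6) ^ 3 + 60 * (3 * s - 6) + 384 - 27 * Qm p with hKZ
  have hid : ∀ q : ℤ × ℤ × ℤ, Sm q = s → Qm q = Qm p →
      KZ = 3 * ((3 * (s - q.1) - 4) * ((3 * (s - q.2.1) - 4) * (3 * (s - q.2.2) - 4))) := by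
    intro q hSq hQq
    have h1 : q.1 + q.2.1 + q.2.2 = s := hSq
    rw [hKZ, ← hQq]
    simp only [Qm, P]
    rw [← h1]
    ring
  have hKZ0 : KZ ≠ 0 := by
    have hself := hid p rfl rfl
    have e1 : (3 * (s - p.1) - 4) ≠ 0 := by omega
    have e2 : (3 * (s - p.2.1) - 4) ≠ 0 := by omega
    have e3 : (3 * (s - p.2.2) - 4) ≠ 0 := by omega
    rw [hself]
    exact mul_ne_zero (by norm_num) (mul_ne_zero e1 (mul_ne_zero e2 e3))
  set K : ℕ := KZ.natAbs with hK
  have hK0 : K ≠ 0 := Int.natAbs_ne_zero.mpr hKZ0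
  refine ⟨K, hK0, ?_, ?_⟩
  · -- size bound
    have hb1 : |p.1| ≤ (N:ℤ) := hsupp _ hp1
    have hb2 : |p.2.1| ≤ (N:ℤ) := hsupp _ hp2
    have hb3 : |p.2.2| ≤ (N:ℤ) := hsupp _ hp3
    have hNZ : (1:ℤ) ≤ (N:ℤ) := by exact_mod_cast hN
    have hsb : |s| ≤ 3 * (N:ℤ) := by
      rw [hs, Sm]
      calc |p.1 + p.2.1 + p.2.2| ≤ |p.1 + p.2.1| + |p.2.2| := abs_add_le _ _
        _ ≤ |p.1| + |p.2.1| + |p.2.2| := by have := abs_add_le p.1 p.2.1; linarith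
        _ ≤ 3 * (N:ℤ) := by linarith
    have hQb : |Qm p| ≤ 33 * (N:ℤ) ^ 3 := by
      rw [Qm]
      have q1 := Pbound _ hNZ _ hb1
      have q2 := Pbound _ hNZ _ hb2
      have q3 := Pbound _ hNZ _ hb3
      calc |P p.1 + P p.2.1 + P p.2.2| ≤ |P p.1 + P p.2.1| + |P p.2.2| := abs_add_le _ _
        _ ≤ |P p.1| + |P p.2.1| + |P p.2.2| := by have := abs_add_le (P p.1) (P p.2.1); linarith
        _ ≤ 33 * (N:ℤ) ^ 3 := by linarith
    have hSb : |3 * s - 6| ≤ 15 * (N:ℤ) := by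
      have := abs_sub (3 * s) (6:ℤ)
      have h6 : |(6:ℤ)| = 6 := by norm_num
      have h3s : |3 * s| = 3 * |s| := by rw [_root_.abs_mul]; norm_num
      calc |3 * s - 6| ≤ |3 * s| + |6| := abs_sub _ _
        _ = 3 * |s| + 6 := by rw [h3s, h6]
        _ ≤ 15 * (N:ℤ) := by linarith
    have hcube : |(3 * s - 6) ^ 3| ≤ 3375 * (N:ℤ) ^ 3 := by
      rw [_root_.abs_pow]
      calc |3 * s - 6| ^ 3 ≤ (15 * (N:ℤ)) ^ 3 := pow_le_pow_left₀ (abs_nonneg _) hSb 3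
        _ = 3375 * (N:ℤ) ^ 3 := by ring
    have hKZb : |KZ| ≤ 6000 * (N:ℤ) ^ 3 := by
      have hA : (0:ℤ) ≤ (N:ℤ) * ((N:ℤ) - 1) := mul_nonneg (by linarith) (by linarith)
      have hB2 : (0:ℤ) ≤ (N:ℤ) ^ 2 * ((N:ℤ) - 1) := mul_nonneg (by positivity) (by linarith)
      have hNsq : (N:ℤ) ≤ (N:ℤ) ^ 2 := by nlinarith
      have hNc : (N:ℤ) ≤ (N:ℤ) ^ 3 := by nlinarith
      have hone : (1:ℤ) ≤ (N:ℤ) ^ 3 := by nlinarith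
      have t1 : |(3 * s - 6) ^ 3 + 60 * (3 * s - 6)| ≤ |(3 * s - 6) ^ 3| + |60 * (3 * s - 6)| :=
        abs_add_le _ _
      have t2 : |(3 * s - 6) ^ 3 + 60 * (3 * s - 6) + 384|
          ≤ |(3 * s - 6) ^ 3 + 60 * (3 * s - 6)| + 384 := by
        have := abs_add_le ((3 * s - 6) ^ 3 + 60 * (3 * s - 6)) (384:ℤ)
        simpa using this
      have t3 : |KZ| ≤ |(3 * s - 6) ^ 3 + 60 * (3 * s - 6) + 384| + |27 * Qm p| := by
        rw [hKZ]
        exact abs_sub _ _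
      have t4 : |60 * (3 * s - 6)| = 60 * |3 * s - 6| := by rw [_root_.abs_mul]; norm_num
      have t5 : |27 * Qm p| = 27 * |Qm p| := by rw [_root_.abs_mul]; norm_num
      calc |KZ| ≤ |(3 * s - 6) ^ 3| + 60 * |3 * s - 6| + 384 + 27 * |Qm p| := by
            rw [← t4, ← t5] at *
            linarith
        _ ≤ 3375 * (N:ℤ) ^ 3 + 60 * (15 * (N:ℤ)) + 384 + 27 * (33 * (N:ℤ) ^ 3) := by linarith
        _ ≤ 6000 * (N:ℤ) ^ 3 := by nlinarith
    have : ((K:ℤ) : ℝ) ≤ ((6000 * (N:ℤ) ^ 3 : ℤ) : ℝ) := by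
      exact_mod_cast (by rw [hK, ← Int.abs_eq_natAbs]; exact hKZb : (K:ℤ) ≤ 6000 * (N:ℤ) ^ 3)
    push_cast at this ⊢
    linarith
  · -- cardinality bound
    set D : Finset ℤ := K.divisors.image (fun d : ℕ => (d:ℤ)) ∪
        K.divisors.image (fun d : ℕ => -(d:ℤ)) with hD
    have hmemD : ∀ d : ℤ, d ∣ KZ → d ∈ D := by
      intro d hdvd
      have hd : d.natAbs ∈ K.divisors :=
        Nat.mem_divisors.mpr ⟨Int.natAbs_dvd_natAbs.mpr hdvd, hK0⟩
      rcases Int.natAbs_eq d with h | h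
      · exact Finset.mem_union_left _ (h ▸ Finset.mem_image_of_mem (fun d : ℕ => (d:ℤ)) hd)
      · exact Finset.mem_union_right _ (h ▸ Finset.mem_image_of_mem (fun d : ℕ => -(d:ℤ)) hd)
    have hcard : ((M3 a).filter fun q => Sm p = Sm q ∧ Qm p = Qm q).card ≤ (D ×ˢ D).card := by
      apply Finset.card_le_card_of_injOn
        (fun q => (3 * (s - q.1) - 4, 3 * (s - q.2.1) - 4))
      · intro q hq
        rw [Finset.mem_coe, Finset.mem_filter] at hq
        obtain ⟨hqM, hSq, hQq⟩ := hq
        have hidq := hid q hSq.symm hQq.symm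
        rw [Finset.mem_coe, Finset.mem_product]
        constructor
        · exact hmemD _ ⟨3 * ((3 * (s - q.2.1) - 4) * (3 * (s - q.2.2) - 4)), by rw [hidq]; ring⟩
        · exact hmemD _ ⟨3 * ((3 * (s - q.1) - 4) * (3 * (s - q.2.2) - 4)), by rw [hidq]; ring⟩
      · intro q hq q' hq' heq
        simp only [Finset.coe_filter, Set.mem_setOf_eq, Finset.mem_filter] at hq hq'
        have e1 : 3 * (s - q.1) - 4 = 3 * (s - q'.1) - 4 := congrArg Prod.fst heq
        have e2 : 3 * (s - q.2.1) - 4 = 3 * (s - q'.2.1) - 4 := congrArg Prod.snd heq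
        have hq1 : q.1 = q'.1 := by omega
        have hq2 : q.2.1 = q'.2.1 := by omega
        have hsq : q.1 + q.2.1 + q.2.2 = s := hq.2.1.symm
        have hsq' : q'.1 + q'.2.1 + q'.2.2 = s := hq'.2.1.symm
        have hq3 : q.2.2 = q'.2.2 := by omega
        exact Prod.ext hq1 (Prod.ext hq2 hq3)
    have hDcard : D.card ≤ 2 * K.divisors.card := by
      calc D.card ≤ (K.divisors.image (fun d : ℕ => (d:ℤ))).card
            + (K.divisors.image (fun d : ℕ => -(d:ℤ))).card := Finset.card_union_le _ _
        _ ≤ K.divisors.card + K.divisors.card :=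
            add_le_add (Finset.card_image_le) (Finset.card_image_le)
        _ = 2 * K.divisors.card := by ring
    have hfinal : ((M3 a).filter fun q => Sm p = Sm q ∧ Qm p = Qm q).card
        ≤ 4 * K.divisors.card ^ 2 := by
      calc ((M3 a).filter fun q => Sm p = Sm q ∧ Qm p = Qm q).card
          ≤ (D ×ˢ D).card := hcard
        _ = D.card * D.card := Finset.card_product _ _
        _ ≤ (2 * K.divisors.card) * (2 * K.divisors.card) :=
            Nat.mul_le_mul hDcard hDcard
        _ = 4 * K.divisors.card ^ 2 := by ring
    exact_mod_cast hfinal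

/-- Divisor bound. -/
lemma divisor_bound (δ : ℝ) (hδ : 0 < δ) :
    ∃ C : ℝ, 1 ≤ C ∧ ∀ K : ℕ, K ≠ 0 → (K.divisors.card : ℝ) ≤ C * (K : ℝ) ^ δ := by
  classical
  set c : ℝ := (2:ℝ) ^ δ - 1 with hc
  have h2δ : (1:ℝ) < (2:ℝ) ^ δ := by
    rw [show (1:ℝ) = (2:ℝ) ^ (0:ℝ) by simp]
    exact (Real.rpow_lt_rpow_left_iff (by norm_num)).mpr hδ
  have hcpos : 0 < c := sub_pos.mpr h2δ
  set KC : ℝ := max 1 (1/c) with hKC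
  have hKC1 : (1:ℝ) ≤ KC := le_max_left _ _
  have hKCc : (1:ℝ) ≤ KC * c := by
    have h1 : (1/c) * c = 1 := by field_simp
    calc (1:ℝ) = (1/c) * c := h1.symm
      _ ≤ KC * c := mul_le_mul_of_nonneg_right (le_max_right _ _) hcpos.le
  set B : ℕ := ⌈(2:ℝ) ^ (1/δ)⌉₊ with hB
  have hKCpow : (1:ℝ) ≤ KC ^ (B + 1) := by
    calc (1:ℝ) = 1 ^ (B + 1) := (one_pow _).symm
      _ ≤ KC ^ (B + 1) := pow_le_pow_left₀ zero_le_one hKC1 _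
  refine ⟨KC ^ (B + 1), hKCpow, ?_⟩
  intro K hK
  have hfact : (K:ℝ) = ∏ q ∈ K.primeFactors, (q:ℝ) ^ (K.factorization q) := by
    conv_lhs => rw [← Nat.factorization_prod_pow_eq_self hK]
    rw [Finsupp.prod, Nat.support_factorization]
    push_cast
    rfl
  rw [Nat.card_divisors hK, hfact, ← Real.finset_prod_rpow _ _ (fun i _ => by positivity) δ]
  push_cast
  have key : ∀ q ∈ K.primeFactors, ((K.factorization q : ℝ) + 1)
      ≤ (if B + 1 ≤ q then 1 else KC) * ((q:ℝ) ^ (K.factorization q)) ^ δ := by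
    intro q hq
    have hqp : Nat.Prime q := Nat.prime_of_mem_primeFactors hq
    have hq2 : (2:ℝ) ≤ (q:ℝ) := by exact_mod_cast hqp.two_le
    set e : ℕ := K.factorization q with he
    have hrw : ((q:ℝ) ^ e) ^ δ = ((q:ℝ) ^ δ) ^ e := by
      rw [← Real.rpow_natCast (q:ℝ) e, ← Real.rpow_mul (by positivity), mul_comm,
        Real.rpow_mul (by positivity), Real.rpow_natCast]
    rw [hrw]
    split_ifs with hBq
    · have hq' : (2:ℝ) ^ (1/δ) ≤ (q:ℝ) := by
        calc (2:ℝ) ^ (1/δ) ≤ ((B:ℕ) : ℝ) := Nat.le_ceil _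
          _ ≤ (q:ℝ) := by exact_mod_cast Nat.le_of_succ_le hBq
      have h2q : (2:ℝ) ≤ (q:ℝ) ^ δ := by
        calc (2:ℝ) = ((2:ℝ) ^ (1/δ)) ^ δ := by
              rw [← Real.rpow_mul (by norm_num), one_div, inv_mul_cancel₀ (ne_of_gt hδ),
                Real.rpow_one]
          _ ≤ (q:ℝ) ^ δ := Real.rpow_le_rpow (by positivity) hq' hδ.le
      have h2e : ((e:ℝ) + 1) ≤ (2:ℝ) ^ e := by
        have h := Nat.lt_two_pow_self (n := e)
        exact_mod_cast Nat.succ_le_of_lt h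
      calc (e:ℝ) + 1 ≤ (2:ℝ) ^ e := h2e
        _ ≤ ((q:ℝ) ^ δ) ^ e := pow_le_pow_left₀ (by norm_num) h2q e
        _ = 1 * ((q:ℝ) ^ δ) ^ e := (one_mul _).symm
    · have h1c : 1 + c ≤ (q:ℝ) ^ δ := by
        have h := Real.rpow_le_rpow (by norm_num) hq2 hδ.le
        rw [hc]; linarith
      have hBern : 1 + (e:ℝ) * c ≤ ((q:ℝ) ^ δ) ^ e := by
        calc 1 + (e:ℝ) * c ≤ (1 + c) ^ e := one_add_mul_le_pow (by linarith) e
          _ ≤ ((q:ℝ) ^ δ) ^ e := pow_le_pow_left₀ (by positivity) h1c e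
      have henn : (0:ℝ) ≤ (e:ℝ) := Nat.cast_nonneg e
      nlinarith [hBern, hKC1, hKCc, henn]
  calc (∏ q ∈ K.primeFactors, ((K.factorization q : ℝ) + 1))
      ≤ ∏ q ∈ K.primeFactors,
          ((if B + 1 ≤ q then 1 else KC) * ((q:ℝ) ^ (K.factorization q)) ^ δ) :=
        Finset.prod_le_prod (fun i _ => by positivity) key
    _ = (∏ q ∈ K.primeFactors, (if B + 1 ≤ q then (1:ℝ) else KC))
        * ∏ q ∈ K.primeFactors, ((q:ℝ) ^ (K.factorization q)) ^ δ :=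
        Finset.prod_mul_distrib
    _ ≤ KC ^ (B + 1) * ∏ q ∈ K.primeFactors, ((q:ℝ) ^ (K.factorization q)) ^ δ := by
        refine mul_le_mul_of_nonneg_right ?_ (Finset.prod_nonneg fun i _ => by positivity)
        rw [Finset.prod_ite, Finset.prod_const_one, one_mul, Finset.prod_const]
        refine pow_le_pow_right₀ hKC1 ?_
        have hsub : (K.primeFactors.filter fun q => ¬ (B + 1 ≤ q)) ⊆ Finset.range (B + 1) := by
          intro q hq
          rw [Finset.mem_filter] at hq
          rw [Finset.mem_range]
          omega
        calc (K.primeFactors.filter fun q => ¬ (B + 1 ≤ q)).card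
            ≤ (Finset.range (B + 1)).card := Finset.card_le_card hsub
          _ = B + 1 := Finset.card_range _

lemma sup_bound (N : ℕ) (a : ℤ →₀ ℂ) (hsupp : ∀ n ∈ a.support, |n| ≤ (N : ℤ))
    (x t : ℝ) : ‖sol a x t‖ ^ 2 ≤ (2 * (N:ℝ) + 1) * ∑ n ∈ a.support, ‖a n‖ ^ 2 := by
  have h1 : ‖sol a x t‖ ≤ ∑ n ∈ a.support, ‖a n‖ := by
    rw [sol_eq]
    refine (norm_sum_le _ _).trans (le_of_eq (Finset.sum_congr rfl fun n _ => ?_))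
    rw [norm_mul, norm_ee, mul_one]
  have h2 : (∑ n ∈ a.support, ‖a n‖) ^ 2
      ≤ (a.support.card : ℝ) * ∑ n ∈ a.support, ‖a n‖ ^ 2 := by
    have h := Finset.sum_mul_sq_le_sq_mul_sq a.support (fun _ => (1:ℝ)) (fun n => ‖a n‖)
    simpa using h
  have h3 : (a.support.card : ℝ) ≤ 2 * (N:ℝ) + 1 := by
    have hsub : a.support ⊆ Finset.Icc (-(N:ℤ)) N := fun n hn =>
      Finset.mem_Icc.mpr (abs_le.mp (hsupp n hn))
    have hle := Finset.card_le_card hsub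
    have hcard : (Finset.Icc (-(N:ℤ)) N).card = 2 * N + 1 := by
      rw [Int.card_Icc]
      omega
    rw [hcard] at hle
    calc (a.support.card : ℝ) ≤ ((2 * N + 1 : ℕ) : ℝ) := by exact_mod_cast hle
      _ = 2 * (N:ℝ) + 1 := by push_cast; ring
  calc ‖sol a x t‖ ^ 2 ≤ (∑ n ∈ a.support, ‖a n‖) ^ 2 :=
      pow_le_pow_left₀ (norm_nonneg _) h1 2
    _ ≤ (a.support.card : ℝ) * ∑ n ∈ a.support, ‖a n‖ ^ 2 := h2
    _ ≤ (2 * (N:ℝ) + 1) * ∑ n ∈ a.support, ‖a n‖ ^ 2 :=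
      mul_le_mul_of_nonneg_right h3 (by positivity)

lemma sol_cont (a : ℤ →₀ ℂ) : Continuous fun p : ℝ × ℝ => sol a p.1 p.2 := by
  have h : ∀ p : ℝ × ℝ, sol a p.1 p.2 = ∑ n ∈ a.support, a n * ee n (P n) p.1 p.2 :=
    fun p => rfl
  simp only [h]
  exact continuous_finset_sum _ fun n _ => continuous_const.mul (cont_ee _ _)

lemma sol_cont_t (a : ℤ →₀ ℂ) (x : ℝ) : Continuous fun t : ℝ => sol a x t := by
  have h : ∀ t : ℝ, sol a x t = ∑ n ∈ a.support, a n * ee n (P n) x t := fun _ => rfl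
  simp only [h]
  exact continuous_finset_sum _ fun n _ => continuous_const.mul (cont_ee_t _ _ _)

lemma int_norm6_eq (a : ℤ →₀ ℂ) :
    (∫ x in (0:ℝ)..(2 * Real.pi), ∫ t in (0:ℝ)..(2 * Real.pi), ‖sol a x t‖ ^ 6)
      = (Zc a).re := by
  have hpt : ∀ x t : ℝ, ‖sol a x t‖ ^ 6
      = ((sol a x t) ^ 3 * (starRingEnd ℂ) ((sol a x t) ^ 3)).re := by
    intro x t
    rw [Complex.mul_conj, Complex.ofReal_re, Complex.normSq_eq_norm_sq,
      norm_pow, ← pow_mul]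
  have hcont3 : Continuous fun y : ℝ × ℝ =>
      (sol a y.1 y.2) ^ 3 * (starRingEnd ℂ) ((sol a y.1 y.2) ^ 3) := by
    have h := sol_cont a
    exact ((h.pow 3).mul ((h.pow 3).star))
  have h1 : ∀ x : ℝ, (∫ t in (0:ℝ)..(2 * Real.pi), ‖sol a x t‖ ^ 6)
      = Complex.reCLM (∫ t in (0:ℝ)..(2 * Real.pi),
          (sol a x t) ^ 3 * (starRingEnd ℂ) ((sol a x t) ^ 3)) := by
    intro x
    have hint : IntervalIntegrable
        (fun t => (sol a x t) ^ 3 * (starRingEnd ℂ) ((sol a x t) ^ 3))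
        MeasureTheory.volume 0 (2 * Real.pi) := by
      have hc : Continuous fun t => (sol a x t) ^ 3 * (starRingEnd ℂ) ((sol a x t) ^ 3) :=
        (((sol_cont_t a x).pow 3).mul (((sol_cont_t a x).pow 3).star))
      exact hc.intervalIntegrable _ _
    rw [← ContinuousLinearMap.intervalIntegral_comp_comm Complex.reCLM hint]
    refine intervalIntegral.integral_congr fun t _ => ?_
    rw [Complex.reCLM_apply]
    exact hpt x t
  simp only [h1]
  have hcontG : Continuous fun x => ∫ t in (0:ℝ)..(2 * Real.pi),
      (sol a x t) ^ 3 * (starRingEnd ℂ) ((sol a x t) ^ 3) := by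
    apply intervalIntegral.continuous_parametric_intervalIntegral_of_continuous
    · exact hcont3
    · exact continuous_const
  have hintG : IntervalIntegrable
      (fun x => ∫ t in (0:ℝ)..(2 * Real.pi),
        (sol a x t) ^ 3 * (starRingEnd ℂ) ((sol a x t) ^ 3))
      MeasureTheory.volume 0 (2 * Real.pi) := hcontG.intervalIntegrable _ _
  rw [ContinuousLinearMap.intervalIntegral_comp_comm Complex.reCLM hintG, int_eq_Zc,
    Complex.reCLM_apply]

end Stmt7Aux

open Stmt7Aux

theorem stmt7 :
    ∀ m : ℕ, 3 ≤ m → ∀ ε : ℝ, 0 < ε → ∃ C : ℝ, 0 < C ∧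
      ∀ (N : ℕ), 1 ≤ N → ∀ a : ℤ →₀ ℂ, (∀ n ∈ a.support, |n| ≤ (N : ℤ)) →
        LpNorm (2 * m) (sol a) ≤
          C * (N : ℝ) ^ (((m : ℝ) - 3) / (2 * m) + ε) *
            (∑ n ∈ a.support, ‖a n‖ ^ 2) ^ ((1:ℝ) / 2) := by
  intro m hm ε hε
  have hm3 : (3:ℝ) ≤ (m:ℝ) := by exact_mod_cast hm
  have hmR : (0:ℝ) < (m:ℝ) := by linarith
  set δ : ℝ := (m:ℝ) * ε / 3 with hδdef
  have hδ : 0 < δ := by positivity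
  obtain ⟨Cd, hCd1, hCd⟩ := divisor_bound δ hδ
  have hCdpos : (0:ℝ) < Cd := lt_of_lt_of_le one_pos hCd1
  set C₀ : ℝ := 3 ^ (m - 3) * (2 * Real.pi) ^ 2 * (4 * Cd ^ 2 * (6000:ℝ) ^ (2 * δ)) with hC0
  have hC0pos : 0 < C₀ := by positivity
  refine ⟨C₀ ^ (1 / (2 * (m:ℝ))), Real.rpow_pos_of_pos hC0pos _, ?_⟩
  intro N hN a hsupp
  set T : ℝ := ∑ n ∈ a.support, ‖a n‖ ^ 2 with hT
  have hT0 : 0 ≤ T := Finset.sum_nonneg fun n _ => by positivity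
  have hN0 : (0:ℝ) < (N:ℝ) := by exact_mod_cast Nat.lt_of_lt_of_le Nat.zero_lt_one hN
  have hN1 : (1:ℝ) ≤ (N:ℝ) := by exact_mod_cast hN
  -- bound on the multiplicities
  set Rb : ℝ := 4 * Cd ^ 2 * (6000:ℝ) ^ (2 * δ) * (N:ℝ) ^ (2 * (m:ℝ) * ε) with hRb
  have hRbpos : 0 < Rb := by positivity
  have hRbound : ∀ p ∈ M3 a,
      (((M3 a).filter fun q => Sm p = Sm q ∧ Qm p = Qm q).card : ℝ) ≤ Rb := by
    intro p hp
    obtain ⟨K, hK0, hKle, hKcard⟩ := count N hN a hsupp p hp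
    have hτ : (K.divisors.card : ℝ) ≤ Cd * (K:ℝ) ^ δ := hCd K hK0
    have hKpow : (K:ℝ) ^ δ ≤ (6000 * (N:ℝ) ^ 3) ^ δ :=
      Real.rpow_le_rpow (by positivity) hKle hδ.le
    have hτ2 : (K.divisors.card : ℝ) ≤ Cd * (6000 * (N:ℝ) ^ 3) ^ δ :=
      hτ.trans (mul_le_mul_of_nonneg_left hKpow hCdpos.le)
    have e1 : ((6000 * (N:ℝ) ^ 3) ^ δ) ^ 2 = (6000 * (N:ℝ) ^ 3) ^ (2 * δ) := by
      rw [← Real.rpow_natCast ((6000 * (N:ℝ) ^ 3) ^ δ) 2, ← Real.rpow_mul (by positivity)]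
      congr 1
      push_cast
      ring
    have e2 : (6000 * (N:ℝ) ^ 3) ^ (2 * δ)
        = (6000:ℝ) ^ (2 * δ) * ((N:ℝ) ^ (3:ℕ)) ^ (2 * δ) :=
      Real.mul_rpow (by norm_num) (by positivity)
    have e3 : ((N:ℝ) ^ (3:ℕ)) ^ (2 * δ) = (N:ℝ) ^ (2 * (m:ℝ) * ε) := by
      rw [← Real.rpow_natCast (N:ℝ) 3, ← Real.rpow_mul hN0.le]
      congr 1
      rw [hδdef]
      push_cast
      ring
    calc (((M3 a).filter fun q => Sm p = Sm q ∧ Qm p = Qm q).card : ℝ)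
        ≤ 4 * (K.divisors.card : ℝ) ^ 2 := hKcard
      _ ≤ 4 * (Cd * (6000 * (N:ℝ) ^ 3) ^ δ) ^ 2 := by
          have h0 : (0:ℝ) ≤ (K.divisors.card : ℝ) := by positivity
          have := pow_le_pow_left₀ h0 hτ2 2
          linarith
      _ = Rb := by
          rw [hRb, mul_pow, e1, e2, e3]
          ring
  -- L⁶ bound
  have hI6 : (∫ x in (0:ℝ)..(2 * Real.pi), ∫ t in (0:ℝ)..(2 * Real.pi), ‖sol a x t‖ ^ 6)
      ≤ (2 * Real.pi) ^ 2 * Rb * T ^ 3 := by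
    rw [int_norm6_eq]
    calc (Zc a).re ≤ |(Zc a).re| := le_abs_self _
      _ ≤ ‖Zc a‖ := Complex.abs_re_le_norm _
      _ = ‖Zc a‖ := rfl
      _ ≤ (2 * Real.pi) ^ 2 * Rb * T ^ 3 := Zc_bound a Rb hRbound
  -- pointwise bound
  set B2 : ℝ := (2 * (N:ℝ) + 1) * T with hB2
  have hB2nn : 0 ≤ B2 := by positivity
  have hpt : ∀ x t : ℝ, ‖sol a x t‖ ^ (2 * m) ≤ B2 ^ (m - 3) * ‖sol a x t‖ ^ 6 := by
    intro x t
    have h2 : ‖sol a x t‖ ^ 2 ≤ B2 := sup_bound N a hsupp x t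
    have hsplit : ‖sol a x t‖ ^ (2 * m)
        = (‖sol a x t‖ ^ 2) ^ (m - 3) * (‖sol a x t‖ ^ 2) ^ 3 := by
      rw [← pow_add, ← pow_mul]
      congr 1
      omega
    rw [hsplit, show (‖sol a x t‖ ^ 2) ^ 3 = ‖sol a x t‖ ^ 6 by rw [← pow_mul]]
    exact mul_le_mul_of_nonneg_right (pow_le_pow_left₀ (by positivity) h2 _) (by positivity)
  -- integrability
  have hcontn : ∀ k : ℕ, Continuous fun y : ℝ × ℝ => ‖sol a y.1 y.2‖ ^ k :=
    fun k => ((sol_cont a).norm.pow k)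
  have hint_t : ∀ (k : ℕ) (x : ℝ), IntervalIntegrable (fun t => ‖sol a x t‖ ^ k)
      MeasureTheory.volume 0 (2 * Real.pi) := by
    intro k x
    have hc : Continuous fun t => ‖sol a x t‖ ^ k := ((sol_cont_t a x).norm.pow k)
    exact hc.intervalIntegrable _ _
  have hcont_int : ∀ k : ℕ, Continuous fun x => ∫ t in (0:ℝ)..(2 * Real.pi), ‖sol a x t‖ ^ k := by
    intro k
    apply intervalIntegral.continuous_parametric_intervalIntegral_of_continuous
    · exact hcontn k
    · exact continuous_const
  have h2pi : (0:ℝ) ≤ 2 * Real.pi := by positivity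
  -- integral comparison
  have hmono1 : ∀ x : ℝ, (∫ t in (0:ℝ)..(2 * Real.pi), ‖sol a x t‖ ^ (2 * m))
      ≤ B2 ^ (m - 3) * ∫ t in (0:ℝ)..(2 * Real.pi), ‖sol a x t‖ ^ 6 := by
    intro x
    have step : (∫ t in (0:ℝ)..(2 * Real.pi), ‖sol a x t‖ ^ (2 * m))
        ≤ ∫ t in (0:ℝ)..(2 * Real.pi), B2 ^ (m - 3) * ‖sol a x t‖ ^ 6 :=
      intervalIntegral.integral_mono_on h2pi (hint_t (2 * m) x)
        ((hint_t 6 x).const_mul _) (fun t _ => hpt x t)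
    rwa [intervalIntegral.integral_const_mul] at step
  have hI2m : (∫ x in (0:ℝ)..(2 * Real.pi), ∫ t in (0:ℝ)..(2 * Real.pi), ‖sol a x t‖ ^ (2 * m))
      ≤ B2 ^ (m - 3) * ((2 * Real.pi) ^ 2 * Rb * T ^ 3) := by
    calc (∫ x in (0:ℝ)..(2 * Real.pi), ∫ t in (0:ℝ)..(2 * Real.pi), ‖sol a x t‖ ^ (2 * m))
        ≤ ∫ x in (0:ℝ)..(2 * Real.pi),
            B2 ^ (m - 3) * ∫ t in (0:ℝ)..(2 * Real.pi), ‖sol a x t‖ ^ 6 := by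
          refine intervalIntegral.integral_mono_on h2pi
            (((hcont_int (2 * m))).intervalIntegrable _ _)
            ((continuous_const.mul (hcont_int 6)).intervalIntegrable _ _)
            (fun x _ => hmono1 x)
      _ = B2 ^ (m - 3) * ∫ x in (0:ℝ)..(2 * Real.pi),
            ∫ t in (0:ℝ)..(2 * Real.pi), ‖sol a x t‖ ^ 6 := by
          rw [intervalIntegral.integral_const_mul]
      _ ≤ B2 ^ (m - 3) * ((2 * Real.pi) ^ 2 * Rb * T ^ 3) :=
          mul_le_mul_of_nonneg_left hI6 (by positivity)
  have hB2le : B2 ≤ 3 * (N:ℝ) * T := by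
    rw [hB2]
    have : 2 * (N:ℝ) + 1 ≤ 3 * (N:ℝ) := by linarith
    exact mul_le_mul_of_nonneg_right this hT0
  have hfinal : (∫ x in (0:ℝ)..(2 * Real.pi), ∫ t in (0:ℝ)..(2 * Real.pi),
        ‖sol a x t‖ ^ (2 * m))
      ≤ C₀ * (N:ℝ) ^ (m - 3) * (N:ℝ) ^ (2 * (m:ℝ) * ε) * T ^ m := by
    calc (∫ x in (0:ℝ)..(2 * Real.pi), ∫ t in (0:ℝ)..(2 * Real.pi), ‖sol a x t‖ ^ (2 * m))
        ≤ B2 ^ (m - 3) * ((2 * Real.pi) ^ 2 * Rb * T ^ 3) := hI2m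
      _ ≤ (3 * (N:ℝ) * T) ^ (m - 3) * ((2 * Real.pi) ^ 2 * Rb * T ^ 3) :=
          mul_le_mul_of_nonneg_right (pow_le_pow_left₀ hB2nn hB2le _) (by positivity)
      _ = C₀ * (N:ℝ) ^ (m - 3) * (N:ℝ) ^ (2 * (m:ℝ) * ε) * (T ^ (m - 3) * T ^ 3) := by
          rw [hC0, hRb, mul_pow, mul_pow]
          ring
      _ = C₀ * (N:ℝ) ^ (m - 3) * (N:ℝ) ^ (2 * (m:ℝ) * ε) * T ^ m := by
          rw [← pow_add, Nat.sub_add_cancel hm]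
  -- nonnegativity of the integral
  have hInn : 0 ≤ ∫ x in (0:ℝ)..(2 * Real.pi), ∫ t in (0:ℝ)..(2 * Real.pi),
      ‖sol a x t‖ ^ (2 * m) :=
    intervalIntegral.integral_nonneg h2pi fun x _ =>
      intervalIntegral.integral_nonneg h2pi fun t _ => by positivity
  -- unfold LpNorm and conclude via rpow manipulations
  have hepm : (2 * (m:ℝ)) = ((2 * m : ℕ) : ℝ) := by push_cast; ring
  have hpow : ∀ x t : ℝ, ‖sol a x t‖ ^ (2 * (m:ℝ)) = ‖sol a x t‖ ^ (2 * m : ℕ) := by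
    intro x t
    rw [hepm, Real.rpow_natCast]
  simp only [LpNorm, hpow]
  set r : ℝ := 1 / (2 * (m:ℝ)) with hr
  have hrpos : 0 ≤ r := by positivity
  have hm0' : (2 * (m:ℝ)) ≠ 0 := by positivity
  have e1 : ((N:ℝ) ^ (m - 3)) ^ r = (N:ℝ) ^ (((m:ℝ) - 3) / (2 * (m:ℝ))) := by
    rw [← Real.rpow_natCast (N:ℝ) (m - 3), ← Real.rpow_mul hN0.le]
    congr 1
    rw [Nat.cast_sub hm, hr, mul_one_div]
    norm_num
  have e2 : ((N:ℝ) ^ (2 * (m:ℝ) * ε)) ^ r = (N:ℝ) ^ ε := by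
    rw [← Real.rpow_mul hN0.le]
    congr 1
    rw [hr]
    field_simp
  have e3 : (T ^ m) ^ r = T ^ ((1:ℝ) / 2) := by
    rw [← Real.rpow_natCast T m, ← Real.rpow_mul hT0]
    congr 1
    rw [hr]
    field_simp
  calc (∫ x in (0:ℝ)..(2 * Real.pi), ∫ t in (0:ℝ)..(2 * Real.pi),
        ‖sol a x t‖ ^ (2 * m)) ^ r
      ≤ (C₀ * (N:ℝ) ^ (m - 3) * (N:ℝ) ^ (2 * (m:ℝ) * ε) * T ^ m) ^ r :=
        Real.rpow_le_rpow hInn hfinal hrpos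
    _ = C₀ ^ r * ((N:ℝ) ^ (m - 3)) ^ r * ((N:ℝ) ^ (2 * (m:ℝ) * ε)) ^ r * (T ^ m) ^ r := by
        rw [Real.mul_rpow (by positivity) (by positivity),
          Real.mul_rpow (by positivity) (by positivity),
          Real.mul_rpow hC0pos.le (by positivity)]
    _ = C₀ ^ r * (N:ℝ) ^ (((m:ℝ) - 3) / (2 * (m:ℝ))) * (N:ℝ) ^ ε * T ^ ((1:ℝ) / 2) := by
        rw [e1, e2, e3]
    _ = C₀ ^ r * (N:ℝ) ^ (((m:ℝ) - 3) / (2 * (m:ℝ)) + ε) * T ^ ((1:ℝ) / 2) := by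
        rw [Real.rpow_add hN0]
        ring
end
end

section
/- For all integers n₁, n₂, τ₁, τ₂, setting n = n₁ + n₂ and τ = τ₁ + τ₂, one has the resonance lower bound |τ − P(n)| + |τ₁ − P(n₁)| + |τ₂ − P(n₂)| ≥ |n₁ · n₂ · (3n − 4)|. -/
theorem stmt13 (n₁ n₂ τ₁ τ₂ : ℤ) :
    |n₁ * n₂ * (3 * (n₁ + n₂) - 4)| ≤
      |τ₁ + τ₂ - P (n₁ + n₂)| + |τ₁ - P n₁| + |τ₂ - P n₂| := by
  have h : n₁ * n₂ * (3 * (n₁ + n₂) - 4) =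
      (τ₁ - P n₁) + (τ₂ - P n₂) - (τ₁ + τ₂ - P (n₁ + n₂)) := by
    unfold P; ring
  rw [h]
  calc |(τ₁ - P n₁) + (τ₂ - P n₂) - (τ₁ + τ₂ - P (n₁ + n₂))|
      ≤ |(τ₁ - P n₁) + (τ₂ - P n₂)| + |τ₁ + τ₂ - P (n₁ + n₂)| := abs_sub _ _
    _ ≤ |τ₁ + τ₂ - P (n₁ + n₂)| + |τ₁ - P n₁| + |τ₂ - P n₂| := by
        have := abs_add_le (τ₁ - P n₁) (τ₂ - P n₂)
        linarith
end
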